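/- arXiv:2302.04835 — 12 statements merged into one kernel-verified Lean document; each statement's English description precedes it below -/
import Mathlib

section
/- Suppose the first-order conditions (FOC) hold with pacing multipliers β_i ≥ 0 (i ∈ [n]) and β_p ≥ 0. Then each notification type's budget is spent optimally in the bang-per-buck sense: for every notification type i and any times t₁, t₂ ∈ 𝒯_i, if x^{t₁} > 0 then (p^{t₁} − β_p v_p^{t₁})/v^{t₁} ≤ (p^{t₂} − β_p v_p^{t₂})/v^{t₂}. -/
open Finset

/-- **Budget spent optimally for notification types (Proposition 2, first part).**
Under the first-order conditions, for any notification type `i` and times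
`t₁, t₂ ∈ 𝒯ᵢ`, if `x t₁ > 0` then the bang-per-buck at `t₁` is at least that at `t₂`,
i.e. `(pt t₁ - βp * vp t₁) / v t₁ ≤ (pt t₂ - βp * vp t₂) / v t₂`. -/
theorem budget_spent_optimally_notif_type
    (T n m : ℕ)
    (it : Fin T → Fin n) (jt : Fin T → Fin m)
    (v vp : Fin T → ℝ) (x : Fin T → ℝ)
    (pu : Fin m → ℝ) (pt : Fin T → ℝ)
    (β : Fin n → ℝ) (βp : ℝ)
    (hv : ∀ t, 0 < v t) (hvp : ∀ t, 0 ≤ vp t)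
    (hx : ∀ t, x t ∈ Set.Icc (0 : ℝ) 1)
    (hpu : ∀ j, 0 ≤ pu j) (hpt : ∀ t, 0 ≤ pt t)
    (hβ : ∀ i, 0 ≤ β i) (hβp : 0 ≤ βp)
    (hFOC : ∀ t,
      (x t = 0 → β (it t) * v t + βp * vp t ≤ pt t ∧ pt t = pu (jt t)) ∧
      (0 < x t → x t < 1 → β (it t) * v t + βp * vp t = pt t ∧ pt t = pu (jt t)) ∧
      (x t = 1 → β (it t) * v t + βp * vp t = pt t ∧ pu (jt t) ≤ pt t)) :
    ∀ (i : Fin n) (t₁ t₂ : Fin T), it t₁ = i → it t₂ = i → 0 < x t₁ →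
      (pt t₁ - βp * vp t₁) / v t₁ ≤ (pt t₂ - βp * vp t₂) / v t₂ := by
  intro i t₁ t₂ h₁ h₂ hx1
  have e₁ : β i * v t₁ + βp * vp t₁ = pt t₁ := by
    rcases lt_or_eq_of_le (hx t₁).2 with h | h
    · have := (hFOC t₁).2.1 hx1 h; rw [h₁] at this; exact this.1
    · have := (hFOC t₁).2.2 h; rw [h₁] at this; exact this.1
  have e₂ : β i * v t₂ + βp * vp t₂ ≤ pt t₂ := by
    rcases lt_or_eq_of_le (hx t₂).1 with h | h
    · rcases lt_or_eq_of_le (hx t₂).2 with h' | h'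
      · have := (hFOC t₂).2.1 h h'; rw [h₂] at this; exact le_of_eq this.1
      · have := (hFOC t₂).2.2 h'; rw [h₂] at this; exact le_of_eq this.1
    · have := (hFOC t₂).1 h.symm; rw [h₂] at this; exact this.1
  have l₁ : (pt t₁ - βp * vp t₁) / v t₁ = β i := by
    field_simp [ne_of_gt (hv t₁)]; linarith
  have l₂ : β i ≤ (pt t₂ - βp * vp t₂) / v t₂ := by
    rw [le_div_iff₀ (hv t₂)]; linarith
  rw [l₁]; exact l₂
end

section
/- Suppose the first-order conditions (FOC) hold with pacing multipliers β_i ≥ 0 (i ∈ [n]) and β_p ≥ 0. Then the platform's budget is spent optimally in the bang-per-buck sense: for any times t₁, t₂ ∈ [𝒯] with v_p^{t₁} > 0 and v_p^{t₂} > 0, if x^{t₁} > 0 then (p^{t₁} − β_{i(t₁)} v^{t₁})/v_p^{t₁} ≤ (p^{t₂} − β_{i(t₂)} v^{t₂})/v_p^{t₂}. -/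
open Finset

/-- **Budget spent optimally for the platform (Proposition 2, second part).**
Under the first-order conditions, for any times `t₁, t₂` with positive platform
valuations, if `x t₁ > 0` then the platform's bang-per-buck at `t₁` is at least
that at `t₂`: `(pt t₁ - β (it t₁) * v t₁) / vp t₁ ≤ (pt t₂ - β (it t₂) * v t₂) / vp t₂`. -/
theorem budget_spent_optimally_platform
    (T n m : ℕ)
    (it : Fin T → Fin n) (jt : Fin T → Fin m)
    (v vp : Fin T → ℝ) (x : Fin T → ℝ)
    (pu : Fin m → ℝ) (pt : Fin T → ℝ)
    (β : Fin n → ℝ) (βp : ℝ)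
    (hv : ∀ t, 0 < v t) (hvp : ∀ t, 0 ≤ vp t)
    (hx : ∀ t, x t ∈ Set.Icc (0 : ℝ) 1)
    (hpu : ∀ j, 0 ≤ pu j) (hpt : ∀ t, 0 ≤ pt t)
    (hβ : ∀ i, 0 ≤ β i) (hβp : 0 ≤ βp)
    (hFOC : ∀ t,
      (x t = 0 → β (it t) * v t + βp * vp t ≤ pt t ∧ pt t = pu (jt t)) ∧
      (0 < x t → x t < 1 → β (it t) * v t + βp * vp t = pt t ∧ pt t = pu (jt t)) ∧
      (x t = 1 → β (it t) * v t + βp * vp t = pt t ∧ pu (jt t) ≤ pt t)) :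
    ∀ t₁ t₂ : Fin T, 0 < vp t₁ → 0 < vp t₂ → 0 < x t₁ →
      (pt t₁ - β (it t₁) * v t₁) / vp t₁ ≤ (pt t₂ - β (it t₂) * v t₂) / vp t₂ := by
  have key : ∀ t, 0 < x t → β (it t) * v t + βp * vp t = pt t := by
    intro t ht
    rcases lt_or_eq_of_le (hx t).2 with h | h
    · exact ((hFOC t).2.1 ht h).1
    · exact ((hFOC t).2.2 h).1
  intro t₁ t₂ h1 h2 hx1
  have e1 : (pt t₁ - β (it t₁) * v t₁) / vp t₁ = βp := by
    have := key t₁ hx1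
    field_simp
    linarith
  rw [e1]
  rcases lt_or_eq_of_le (hx t₂).1 with h | h
  · have := key t₂ h
    rw [le_div_iff₀ h2]
    linarith
  · have hle := ((hFOC t₂).1 h.symm).1
    rw [le_div_iff₀ h2]
    linarith
end

section
/- Suppose the first-order conditions (FOC) hold with β_i = B_i/u_i for every notification type i and β_p = B_p/u_p (with u_i > 0 for all i and u_p > 0). Then the total payment at the per-notification prices equals the total budget: Σ_{t ∈ [𝒯]} x^t · p^t = B_p + Σ_{i ∈ [n]} B_i. -/
open Finset

/-- **Total payment equals total budget.** If the first-order conditions hold with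
`β i = B i / u i` and `βp = Bp / up`, then `∑_t x t * pt t = Bp + ∑_i B i`. -/
theorem total_payment_equals_total_budget
    (T n m : ℕ)
    (it : Fin T → Fin n) (jt : Fin T → Fin m)
    (v vp : Fin T → ℝ) (x : Fin T → ℝ)
    (B : Fin n → ℝ) (Bp : ℝ)
    (pu : Fin m → ℝ) (pt : Fin T → ℝ)
    (β : Fin n → ℝ) (βp : ℝ)
    (u : Fin n → ℝ) (up : ℝ)
    (hv : ∀ t, 0 < v t) (hvp : ∀ t, 0 ≤ vp t)
    (hx : ∀ t, x t ∈ Set.Icc (0 : ℝ) 1)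
    (hB : ∀ i, 0 < B i) (hBp : 0 < Bp)
    (hpu : ∀ j, 0 ≤ pu j) (hpt : ∀ t, 0 ≤ pt t)
    (hu : ∀ i, u i = ∑ t ∈ univ.filter (fun t => it t = i), v t * x t)
    (hup : up = ∑ t, vp t * x t)
    (hupos : ∀ i, 0 < u i) (huppos : 0 < up)
    (hβ : ∀ i, β i = B i / u i) (hβp : βp = Bp / up)
    (hFOC : ∀ t,
      (x t = 0 → β (it t) * v t + βp * vp t ≤ pt t ∧ pt t = pu (jt t)) ∧
      (0 < x t → x t < 1 → β (it t) * v t + βp * vp t = pt t ∧ pt t = pu (jt t)) ∧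
      (x t = 1 → β (it t) * v t + βp * vp t = pt t ∧ pu (jt t) ≤ pt t)) :
    ∑ t, x t * pt t = Bp + ∑ i, B i := by
  have key : ∀ t, x t * pt t = x t * (β (it t) * v t + βp * vp t) := by
    intro t
    obtain ⟨h0, hmid, h1⟩ := hFOC t
    obtain ⟨hx0, hx1⟩ := hx t
    rcases eq_or_lt_of_le hx0 with h | h
    · simp [← h]
    · rcases eq_or_lt_of_le hx1 with h' | h'
      · rw [(h1 h').1]
      · rw [(hmid h h').1]
  calc ∑ t, x t * pt t = ∑ t, (β (it t) * (v t * x t) + βp * (vp t * x t)) := by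
        refine Finset.sum_congr rfl fun t _ => ?_
        rw [key t]; ring
    _ = ∑ t, β (it t) * (v t * x t) + βp * up := by
        rw [Finset.sum_add_distrib, ← Finset.mul_sum, hup]
    _ = Bp + ∑ i, B i := by
        have hsplit : ∑ t, β (it t) * (v t * x t)
            = ∑ i, ∑ t ∈ univ.filter (fun t => it t = i), β (it t) * (v t * x t) := by
          rw [← Finset.sum_fiberwise (g := it)]
        rw [hsplit]
        have : ∀ i : Fin n, ∑ t ∈ univ.filter (fun t => it t = i), β (it t) * (v t * x t)
            = B i := by
          intro i
          have : ∑ t ∈ univ.filter (fun t => it t = i), β (it t) * (v t * x t)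
              = β i * ∑ t ∈ univ.filter (fun t => it t = i), v t * x t := by
            rw [Finset.mul_sum]
            refine Finset.sum_congr rfl fun t ht => ?_
            simp only [Finset.mem_filter] at ht
            rw [ht.2]
          rw [this, ← hu i, hβ i, div_mul_cancel₀ _ (hupos i).ne']
        rw [Finset.sum_congr rfl fun i _ => this i, hβp,
          div_mul_cancel₀ _ huppos.ne', add_comm]
end

section
/- Suppose the first-order conditions (FOC) hold with β_i = B_i/u_i with u_i > 0 for every notification type i and β_p ≥ 0, and suppose p^t − β_p v_p^t ≥ 0 for all t. Then every notification type receives a bundle in its demand set: for every i and every vector y with y^t ∈ [0,1] for t ∈ 𝒯_i satisfying Σ_{t ∈ 𝒯_i} y^t (p^t − β_p v_p^t) ≤ B_i, it holds that Σ_{t ∈ 𝒯_i} y^t v^t ≤ Σ_{t ∈ 𝒯_i} x^t v^t. -/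
open Finset

/-- **Notification types receive bundles in their demand sets.** Under the
first-order conditions with `β i = B i / u i` (and `u i > 0`), `βp ≥ 0`, and
nonnegative subsidized prices, any affordable bundle `y` for notification type `i`
yields at most the utility of the equilibrium allocation `x`. -/
theorem notif_type_gets_demand
    (T n m : ℕ)
    (it : Fin T → Fin n) (jt : Fin T → Fin m)
    (v vp : Fin T → ℝ) (x : Fin T → ℝ)
    (B : Fin n → ℝ)
    (pu : Fin m → ℝ) (pt : Fin T → ℝ)
    (β : Fin n → ℝ) (βp : ℝ)
    (u : Fin n → ℝ)
    (hv : ∀ t, 0 < v t) (hvp : ∀ t, 0 ≤ vp t)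
    (hx : ∀ t, x t ∈ Set.Icc (0 : ℝ) 1)
    (hB : ∀ i, 0 < B i)
    (hpu : ∀ j, 0 ≤ pu j) (hpt : ∀ t, 0 ≤ pt t)
    (hu : ∀ i, u i = ∑ t ∈ univ.filter (fun t => it t = i), v t * x t)
    (hupos : ∀ i, 0 < u i)
    (hβ : ∀ i, β i = B i / u i) (hβp : 0 ≤ βp)
    (hsubs : ∀ t, 0 ≤ pt t - βp * vp t)
    (hFOC : ∀ t,
      (x t = 0 → β (it t) * v t + βp * vp t ≤ pt t ∧ pt t = pu (jt t)) ∧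
      (0 < x t → x t < 1 → β (it t) * v t + βp * vp t = pt t ∧ pt t = pu (jt t)) ∧
      (x t = 1 → β (it t) * v t + βp * vp t = pt t ∧ pu (jt t) ≤ pt t)) :
    ∀ (i : Fin n) (y : Fin T → ℝ),
      (∀ t, it t = i → y t ∈ Set.Icc (0 : ℝ) 1) →
      (∑ t ∈ univ.filter (fun t => it t = i), y t * (pt t - βp * vp t)) ≤ B i →
      (∑ t ∈ univ.filter (fun t => it t = i), y t * v t) ≤
        ∑ t ∈ univ.filter (fun t => it t = i), x t * v t := by
  intro i y hy hbudget
  have hβpos : 0 < β i := by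
    rw [hβ]; exact div_pos (hB i) (hupos i)
  have key : ∀ t, it t = i → β i * v t ≤ pt t - βp * vp t := by
    intro t hti
    have h := hFOC t
    rcases (hx t).1.lt_or_eq with hx0 | hx0
    · rcases (hx t).2.eq_or_lt with hx1 | hx1
      · have := (h.2.2 hx1).1
        rw [hti] at this; linarith
      · have := (h.2.1 hx0 hx1).1
        rw [hti] at this; linarith
    · have := (h.1 hx0.symm).1
      rw [hti] at this; linarith
  have h1 : β i * ∑ t ∈ univ.filter (fun t => it t = i), y t * v t ≤ B i := by
    rw [Finset.mul_sum]
    calc ∑ t ∈ univ.filter (fun t => it t = i), β i * (y t * v t)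
        ≤ ∑ t ∈ univ.filter (fun t => it t = i), y t * (pt t - βp * vp t) := by
          apply Finset.sum_le_sum
          intro t ht
          have hti := (Finset.mem_filter.mp ht).2
          have hy0 := (hy t hti).1
          have := key t hti
          nlinarith
      _ ≤ B i := hbudget
  have h2 : β i * ∑ t ∈ univ.filter (fun t => it t = i), x t * v t = B i := by
    have : ∑ t ∈ univ.filter (fun t => it t = i), x t * v t = u i := by
      rw [hu i]; exact Finset.sum_congr rfl (fun t _ => mul_comm _ _)
    rw [this, hβ, div_mul_cancel₀]
    exact (hupos i).ne'
  have := h1.trans_eq h2.symm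
  exact le_of_mul_le_mul_left this hβpos
end

section
/- Suppose the first-order conditions (FOC) hold with β_p = B_p/u_p where u_p > 0, and β_i ≥ 0 for each notification type i, and suppose p^t − β_{i(t)} v^t ≥ 0 for all t. Then the platform receives a bundle in its demand set: for every vector y with y^t ∈ [0,1] for t ∈ [𝒯] satisfying Σ_{t ∈ [𝒯]} y^t (p^t − β_{i(t)} v^t) ≤ B_p, it holds that Σ_{t ∈ [𝒯]} y^t v_p^t ≤ Σ_{t ∈ [𝒯]} x^t v_p^t. -/
open Finset

/-- **The platform receives a bundle in its demand set.** Under the first-order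
conditions with `βp = Bp / up` (and `up > 0`), `β i ≥ 0`, and nonnegative prices net
of the notification-type bids, any affordable bundle `y` for the platform yields at
most the platform utility of the equilibrium allocation `x`. -/
theorem platform_gets_demand
    (T n m : ℕ)
    (it : Fin T → Fin n) (jt : Fin T → Fin m)
    (v vp : Fin T → ℝ) (x : Fin T → ℝ)
    (Bp : ℝ)
    (pu : Fin m → ℝ) (pt : Fin T → ℝ)
    (β : Fin n → ℝ) (βp : ℝ)
    (up : ℝ)
    (hv : ∀ t, 0 < v t) (hvp : ∀ t, 0 ≤ vp t)
    (hx : ∀ t, x t ∈ Set.Icc (0 : ℝ) 1)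
    (hBp : 0 < Bp)
    (hpu : ∀ j, 0 ≤ pu j) (hpt : ∀ t, 0 ≤ pt t)
    (hup : up = ∑ t, vp t * x t)
    (huppos : 0 < up)
    (hβ : ∀ i, 0 ≤ β i) (hβp : βp = Bp / up)
    (hnet : ∀ t, 0 ≤ pt t - β (it t) * v t)
    (hFOC : ∀ t,
      (x t = 0 → β (it t) * v t + βp * vp t ≤ pt t ∧ pt t = pu (jt t)) ∧
      (0 < x t → x t < 1 → β (it t) * v t + βp * vp t = pt t ∧ pt t = pu (jt t)) ∧
      (x t = 1 → β (it t) * v t + βp * vp t = pt t ∧ pu (jt t) ≤ pt t)) :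
    ∀ y : Fin T → ℝ,
      (∀ t, y t ∈ Set.Icc (0 : ℝ) 1) →
      (∑ t, y t * (pt t - β (it t) * v t)) ≤ Bp →
      (∑ t, y t * vp t) ≤ ∑ t, x t * vp t := by
  intro y hy hbudget
  have hβppos : 0 < βp := by rw [hβp]; positivity
  have h1 : ∀ t, βp * vp t ≤ pt t - β (it t) * v t := by
    intro t
    obtain ⟨h0, h1'⟩ := hx t
    rcases eq_or_lt_of_le h0 with he | hpos
    · have := ((hFOC t).1 he.symm).1; linarith
    · rcases eq_or_lt_of_le h1' with he | hlt
      · have := ((hFOC t).2.2 he).1; linarith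
      · have := ((hFOC t).2.1 hpos hlt).1; linarith
  have h2 : ∀ t, x t * (pt t - β (it t) * v t) = x t * (βp * vp t) := by
    intro t
    obtain ⟨h0, h1'⟩ := hx t
    rcases eq_or_lt_of_le h0 with he | hpos
    · rw [← he]; ring
    · rcases eq_or_lt_of_le h1' with he | hlt
      · have := ((hFOC t).2.2 he).1; rw [show pt t - β (it t) * v t = βp * vp t by linarith]
      · have := ((hFOC t).2.1 hpos hlt).1; rw [show pt t - β (it t) * v t = βp * vp t by linarith]
  have hspend : ∑ t, x t * (pt t - β (it t) * v t) = Bp := by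
    calc ∑ t, x t * (pt t - β (it t) * v t) = ∑ t, x t * (βp * vp t) := by
          exact Finset.sum_congr rfl (fun t _ => h2 t)
      _ = βp * ∑ t, vp t * x t := by rw [Finset.mul_sum]; exact Finset.sum_congr rfl (fun t _ => by ring)
      _ = βp * up := by rw [hup]
      _ = Bp := by rw [hβp]; field_simp
  have hmain : βp * ∑ t, y t * vp t ≤ βp * ∑ t, x t * vp t := by
    calc βp * ∑ t, y t * vp t = ∑ t, y t * (βp * vp t) := by
          rw [Finset.mul_sum]; exact Finset.sum_congr rfl (fun t _ => by ring)
      _ ≤ ∑ t, y t * (pt t - β (it t) * v t) := by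
          apply Finset.sum_le_sum
          intro t _
          exact mul_le_mul_of_nonneg_left (h1 t) (hy t).1
      _ ≤ Bp := hbudget
      _ = ∑ t, x t * (pt t - β (it t) * v t) := hspend.symm
      _ = βp * ∑ t, x t * vp t := by
          rw [Finset.mul_sum]; exact Finset.sum_congr rfl (fun t _ => by rw [h2 t]; ring)
  exact le_of_mul_le_mul_left hmain hβppos
end

section
/- Let x* be a maximizer, over all feasible allocations x (i.e., x^t ∈ [0,1] for all t and Σ_{t ∈ 𝒯_j} x^t ≤ s_j for all users j) whose utilities satisfy u_i(x) > 0 for all i and u_p(x) > 0, of the Eisenberg–Gale objective Σ_{i ∈ [n]} B_i log u_i(x) + B_p log u_p(x), and assume u_i(x*) > 0 for all i and u_p(x*) > 0. Then the supply of every user is exhausted: for every user j, Σ_{t ∈ 𝒯_j} (x*)^t = min(s_j, |𝒯_j|). -/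
open Finset

lemma sum_mul_update_mem {α : Type*} [DecidableEq α] (S : Finset α) (w f : α → ℝ)
    (t0 : α) (c : ℝ) (h : t0 ∈ S) :
    ∑ t ∈ S, w t * Function.update f t0 c t = (∑ t ∈ S, w t * f t) + w t0 * (c - f t0) := by
  have hfun : (fun t => w t * Function.update f t0 c t)
      = Function.update (fun t => w t * f t) t0 (w t0 * c) := by
    funext t
    by_cases ht : t = t0
    · subst ht; simp
    · simp [Function.update_of_ne ht]
  rw [hfun, Finset.sum_update_of_mem h, Finset.sdiff_singleton_eq_erase,
    ← Finset.add_sum_erase S (fun t => w t * f t) h]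
  ring

lemma sum_mul_update_notMem {α : Type*} [DecidableEq α] (S : Finset α) (w f : α → ℝ)
    (t0 : α) (c : ℝ) (h : t0 ∉ S) :
    ∑ t ∈ S, w t * Function.update f t0 c t = ∑ t ∈ S, w t * f t := by
  refine Finset.sum_congr rfl fun t ht => ?_
  have : t ≠ t0 := fun e => h (e ▸ ht)
  rw [Function.update_of_ne this]

lemma sum_update_mem' {α : Type*} [DecidableEq α] (S : Finset α) (f : α → ℝ)
    (t0 : α) (c : ℝ) (h : t0 ∈ S) :
    ∑ t ∈ S, Function.update f t0 c t = (∑ t ∈ S, f t) + (c - f t0) := by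
  have := sum_mul_update_mem S (fun _ => (1:ℝ)) f t0 c h
  simpa using this

lemma sum_update_notMem' {α : Type*} [DecidableEq α] (S : Finset α) (f : α → ℝ)
    (t0 : α) (c : ℝ) (h : t0 ∉ S) :
    ∑ t ∈ S, Function.update f t0 c t = ∑ t ∈ S, f t := by
  have := sum_mul_update_notMem S (fun _ => (1:ℝ)) f t0 c h
  simpa using this

/-- **Supply exhaustion at an Eisenberg–Gale maximizer.** If `x*` maximizes the EG
objective `∑ i, B i * log (uᵢ x) + Bp * log (u_p x)` over feasible allocations with
positive utilities, then for every user `j`, `∑_{t ∈ 𝒯ⱼ} x* t = min (s j) |𝒯ⱼ|`. -/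
theorem EG_supply_exhausted
    (T n m : ℕ)
    (it : Fin T → Fin n) (jt : Fin T → Fin m)
    (v vp : Fin T → ℝ)
    (B : Fin n → ℝ) (Bp : ℝ) (s : Fin m → ℝ)
    (xstar : Fin T → ℝ)
    (hv : ∀ t, 0 < v t) (hvp : ∀ t, 0 ≤ vp t)
    (hB : ∀ i, 0 < B i) (hBp : 0 < Bp) (hs : ∀ j, 0 < s j)
    (hfeas : (∀ t, xstar t ∈ Set.Icc (0 : ℝ) 1) ∧
      ∀ j, ∑ t ∈ univ.filter (fun t => jt t = j), xstar t ≤ s j)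
    (hpos : (∀ i, 0 < ∑ t ∈ univ.filter (fun t => it t = i), v t * xstar t) ∧
      0 < ∑ t, vp t * xstar t)
    (hmax : ∀ x : Fin T → ℝ,
      (∀ t, x t ∈ Set.Icc (0 : ℝ) 1) →
      (∀ j, ∑ t ∈ univ.filter (fun t => jt t = j), x t ≤ s j) →
      (∀ i, 0 < ∑ t ∈ univ.filter (fun t => it t = i), v t * x t) →
      (0 < ∑ t, vp t * x t) →
      (∑ i, B i * Real.log (∑ t ∈ univ.filter (fun t => it t = i), v t * x t)) +
          Bp * Real.log (∑ t, vp t * x t) ≤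
        (∑ i, B i * Real.log (∑ t ∈ univ.filter (fun t => it t = i), v t * xstar t)) +
          Bp * Real.log (∑ t, vp t * xstar t)) :
    ∀ j, ∑ t ∈ univ.filter (fun t => jt t = j), xstar t =
      min (s j) ((univ.filter (fun t => jt t = j)).card : ℝ) := by
  obtain ⟨hbox, hsupply⟩ := hfeas
  obtain ⟨hposi, hposp⟩ := hpos
  intro j
  set S := univ.filter (fun t => jt t = j) with hS
  set a := ∑ t ∈ S, xstar t with ha
  have hle1 : a ≤ s j := hsupply j
  have hle2 : a ≤ (S.card : ℝ) := by
    calc a ≤ ∑ t ∈ S, (1:ℝ) := Finset.sum_le_sum fun t _ => (hbox t).2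
    _ = (S.card : ℝ) := by simp
  have hlemin : a ≤ min (s j) (S.card : ℝ) := le_min hle1 hle2
  rcases lt_or_eq_of_le hlemin with hlt | heq
  · exfalso
    have hlts : a < s j := lt_of_lt_of_le hlt (min_le_left _ _)
    have hltc : a < (S.card : ℝ) := lt_of_lt_of_le hlt (min_le_right _ _)
    -- there is t0 ∈ S with xstar t0 < 1
    have hex : ∃ t0 ∈ S, xstar t0 < 1 := by
      by_contra hc
      push_neg at hc
      have : a = (S.card : ℝ) := by
        have : ∀ t ∈ S, xstar t = 1 := fun t ht => le_antisymm (hbox t).2 (hc t ht)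
        rw [ha, Finset.sum_congr rfl this]; simp
      exact absurd this (ne_of_lt hltc)
    obtain ⟨t0, ht0S, ht0⟩ := hex
    have ht0j : jt t0 = j := (Finset.mem_filter.mp ht0S).2
    set ε : ℝ := min (1 - xstar t0) (s j - a) with hε
    have hεpos : 0 < ε := lt_min (by linarith) (by linarith)
    set x : Fin T → ℝ := Function.update xstar t0 (xstar t0 + ε) with hx
    have hxbox : ∀ t, x t ∈ Set.Icc (0:ℝ) 1 := by
      intro t
      by_cases ht : t = t0
      · subst ht
        have hxt : x t = xstar t + ε := by rw [hx, Function.update_self]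
        constructor
        · rw [hxt]; have := (hbox t).1; linarith
        · rw [hxt]; have : ε ≤ 1 - xstar t := min_le_left _ _
          linarith
      · rw [hx, Function.update_of_ne ht]; exact hbox t
    have hxsupply : ∀ j', ∑ t ∈ univ.filter (fun t => jt t = j'), x t ≤ s j' := by
      intro j'
      by_cases hj' : j' = j
      · rw [hj', ← hS, hx, sum_update_mem' _ _ _ _ ht0S]
        have h1 : ε ≤ s j - a := min_le_right _ _
        linarith [ha]
      · have ht0not : t0 ∉ univ.filter (fun t => jt t = j') := by
          simp only [mem_filter, mem_univ, true_and, ht0j]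
          exact fun e => hj' e.symm
        rw [hx, sum_update_notMem' _ _ _ _ ht0not]
        exact hsupply j'
    -- utilities
    have hui : ∀ i, ∑ t ∈ univ.filter (fun t => it t = i), v t * x t =
        (∑ t ∈ univ.filter (fun t => it t = i), v t * xstar t) +
          (if it t0 = i then v t0 * ε else 0) := by
      intro i
      by_cases hi : it t0 = i
      · have ht0mem : t0 ∈ univ.filter (fun t => it t = i) := by simp [hi]
        rw [hx, sum_mul_update_mem _ _ _ _ _ ht0mem, if_pos hi]
        ring
      · have ht0not : t0 ∉ univ.filter (fun t => it t = i) := by simp [hi]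
        rw [hx, sum_mul_update_notMem _ _ _ _ _ ht0not, if_neg hi, add_zero]
    have hup : ∑ t, vp t * x t = (∑ t, vp t * xstar t) + vp t0 * ε := by
      have := sum_mul_update_mem univ vp xstar t0 (xstar t0 + ε) (mem_univ t0)
      rw [hx]
      simpa using this
    have hxposi : ∀ i, 0 < ∑ t ∈ univ.filter (fun t => it t = i), v t * x t := by
      intro i
      rw [hui i]
      have h1 := hposi i
      by_cases hi : it t0 = i
      · rw [if_pos hi]
        have := mul_pos (hv t0) hεpos
        linarith
      · rw [if_neg hi]; linarith
    have hxposp : 0 < ∑ t, vp t * x t := by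
      rw [hup]
      have := mul_nonneg (hvp t0) hεpos.le
      linarith
    -- strict improvement
    have hkey := hmax x hxbox hxsupply hxposi hxposp
    have hlogsum : (∑ i, B i * Real.log (∑ t ∈ univ.filter (fun t => it t = i), v t * xstar t))
        < ∑ i, B i * Real.log (∑ t ∈ univ.filter (fun t => it t = i), v t * x t) := by
      apply Finset.sum_lt_sum
      · intro i _
        apply mul_le_mul_of_nonneg_left _ (hB i).le
        apply Real.log_le_log (hposi i)
        rw [hui i]
        by_cases hi : it t0 = i
        · rw [if_pos hi]
          have := mul_pos (hv t0) hεpos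
          linarith
        · rw [if_neg hi, add_zero]
      · refine ⟨it t0, mem_univ _, ?_⟩
        apply mul_lt_mul_of_pos_left _ (hB (it t0))
        apply Real.log_lt_log (hposi (it t0))
        rw [hui (it t0), if_pos rfl]
        have := mul_pos (hv t0) hεpos
        linarith
    have hlogp : Bp * Real.log (∑ t, vp t * xstar t) ≤ Bp * Real.log (∑ t, vp t * x t) := by
      apply mul_le_mul_of_nonneg_left _ hBp.le
      apply Real.log_le_log hposp
      rw [hup]
      have := mul_nonneg (hvp t0) hεpos.le
      linarith
    linarith
  · exact heq
end

section
/- Suppose (x, p, β) is an nFPPE: the first-order conditions (FOC) hold, β_i = B_i/u_i for all i and β_p = B_p/u_p (with u_i > 0 for all i and u_p > 0), p^t − β_p v_p^t ≥ 0 for all t, and Σ_{t ∈ 𝒯_j} x^t = s_j for every user j. Assume |𝒯_i ∩ 𝒯_j| ≥ s_j for every notification type i and user j. Let f_i := B_i/(B_p + Σ_{k ∈ [n]} B_k). Then every notification type gets at least its proportional utility: for every i, Σ_{t ∈ 𝒯_i} x^t v^t ≥ Σ_{t ∈ 𝒯_i} v^t · (s_{j(t)} · f_i / |𝒯_i ∩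 𝒯_{j(t)}|). -/
open Finset

/-- **Proportionality of nFPPE for notification types (Proposition 3, first part).**
In an nFPPE (FOC, paced multipliers `β i = B i / u i`, `βp = Bp / up`, nonnegative
subsidized prices, supply exhausted), every notification type's utility is at least
its proportional utility `∑_{t ∈ 𝒯ᵢ} v t * (s (jt t) * f i / |𝒯ᵢ ∩ 𝒯_{jt t}|)` where
`f i = B i / (Bp + ∑ k, B k)`. -/
theorem nFPPE_proportionality_notif_types
    (T n m : ℕ)
    (it : Fin T → Fin n) (jt : Fin T → Fin m)
    (v vp : Fin T → ℝ) (x : Fin T → ℝ)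
    (B : Fin n → ℝ) (Bp : ℝ) (s : Fin m → ℝ)
    (pu : Fin m → ℝ) (pt : Fin T → ℝ)
    (β : Fin n → ℝ) (βp : ℝ)
    (u : Fin n → ℝ) (up : ℝ)
    (hv : ∀ t, 0 < v t) (hvp : ∀ t, 0 ≤ vp t)
    (hx : ∀ t, x t ∈ Set.Icc (0 : ℝ) 1)
    (hB : ∀ i, 0 < B i) (hBp : 0 < Bp) (hs : ∀ j, 0 < s j)
    (hpu : ∀ j, 0 ≤ pu j) (hpt : ∀ t, 0 ≤ pt t)
    (hu : ∀ i, u i = ∑ t ∈ univ.filter (fun t => it t = i), v t * x t)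
    (hup : up = ∑ t, vp t * x t)
    (hupos : ∀ i, 0 < u i) (huppos : 0 < up)
    (hβ : ∀ i, β i = B i / u i) (hβp : βp = Bp / up)
    (hsubs : ∀ t, 0 ≤ pt t - βp * vp t)
    (hsupply : ∀ j, ∑ t ∈ univ.filter (fun t => jt t = j), x t = s j)
    (hcard : ∀ i j, s j ≤ ((univ.filter (fun t => it t = i ∧ jt t = j)).card : ℝ))
    (hFOC : ∀ t,
      (x t = 0 → β (it t) * v t + βp * vp t ≤ pt t ∧ pt t = pu (jt t)) ∧
      (0 < x t → x t < 1 → β (it t) * v t + βp * vp t = pt t ∧ pt t = pu (jt t)) ∧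
      (x t = 1 → β (it t) * v t + βp * vp t = pt t ∧ pu (jt t) ≤ pt t)) :
    ∀ i, (∑ t ∈ univ.filter (fun t => it t = i),
        v t * (s (jt t) * (B i / (Bp + ∑ k, B k)) /
          ((univ.filter (fun t' => it t' = i ∧ jt t' = jt t)).card : ℝ))) ≤
      ∑ t ∈ univ.filter (fun t => it t = i), x t * v t := by
  intro i
  have hSpos : (0:ℝ) < Bp + ∑ k, B k := by
    have : (0:ℝ) < ∑ k, B k := Finset.sum_pos (fun k _ => hB k) ⟨i, mem_univ i⟩
    linarith
  set f : ℝ := B i / (Bp + ∑ k, B k) with hf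
  have hfpos : 0 < f := div_pos (hB i) hSpos
  set c : Fin m → ℝ := fun j => ((univ.filter (fun t => it t = i ∧ jt t = j)).card : ℝ) with hc
  set y : Fin T → ℝ := fun t => s (jt t) * f / c (jt t) with hy
  have hβpos : 0 < β i := by rw [hβ]; exact div_pos (hB i) (hupos i)
  have hβppos : 0 < βp := by rw [hβp]; exact div_pos hBp huppos
  have hcpos : ∀ j, 0 < c j := fun j => lt_of_lt_of_le (hs j) (hcard i j)
  have hy0 : ∀ t, 0 ≤ y t := fun t =>
    div_nonneg (mul_nonneg (hs _).le hfpos.le) (hcpos _).le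
  have hyf : ∀ t, y t ≤ f := by
    intro t
    rw [hy]
    simp only
    rw [div_le_iff₀ (hcpos _)]
    nlinarith [hcard i (jt t), hs (jt t), hcpos (jt t)]
  -- case analysis on FOC
  have hcases : ∀ t, (β (it t) * v t + βp * vp t ≤ pt t ∧ pt t = pu (jt t)) ∨
      (x t = 1 ∧ β (it t) * v t + βp * vp t = pt t ∧ pu (jt t) ≤ pt t) := by
    intro t
    obtain ⟨h0, hmid, h1⟩ := hFOC t
    obtain ⟨hx0, hx1⟩ := hx t
    rcases eq_or_lt_of_le hx1 with h | h
    · exact Or.inr ⟨h, h1 h⟩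
    · rcases eq_or_lt_of_le hx0 with h0' | h0'
      · exact Or.inl (h0 h0'.symm)
      · obtain ⟨a, b⟩ := hmid h0' h
        exact Or.inl ⟨le_of_eq a, b⟩
  have hptpu : ∀ t, pu (jt t) ≤ pt t := by
    intro t
    rcases hcases t with ⟨_, h⟩ | ⟨_, _, h⟩
    · exact h.ge
    · exact h
  have hFeq : ∀ t, 0 < x t → β (it t) * v t + βp * vp t = pt t := by
    intro t ht
    obtain ⟨h0, hmid, h1⟩ := hFOC t
    rcases eq_or_lt_of_le (hx t).2 with h | h
    · exact (h1 h).1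
    · exact (hmid ht h).1
  -- key per-term inequality on 𝒯_i
  have key : ∀ t, it t = i →
      β i * (v t * y t) ≤ pu (jt t) * y t + f * ((pt t - pu (jt t)) * x t) := by
    intro t hti
    have hvpn : 0 ≤ βp * vp t := mul_nonneg hβppos.le (hvp t)
    rcases hcases t with ⟨hle, heq⟩ | ⟨hx1, heq, hpule⟩
    · rw [hti] at hle
      have hA : β i * v t ≤ pu (jt t) := by linarith
      have := mul_le_mul_of_nonneg_right hA (hy0 t)
      rw [heq, sub_self, zero_mul, mul_zero, add_zero]
      linarith [this]
    · rw [hti] at heq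
      have hA : β i * v t ≤ pt t := by linarith
      have h1 := mul_le_mul_of_nonneg_right hA (hy0 t)
      have h2 := mul_le_mul_of_nonneg_left (hyf t) (sub_nonneg.2 hpule)
      rw [hx1, mul_one]
      nlinarith [h1, h2]
  -- sum the key inequality
  have hsum1 : β i * (∑ t ∈ univ.filter (fun t => it t = i), v t * y t) ≤
      (∑ t ∈ univ.filter (fun t => it t = i), pu (jt t) * y t) +
      f * (∑ t ∈ univ.filter (fun t => it t = i), (pt t - pu (jt t)) * x t) := by
    rw [mul_sum, mul_sum, ← sum_add_distrib]
    refine sum_le_sum fun t ht => ?_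
    exact key t (by simpa using ht)
  -- bound the gap sum by the global gap
  have hgap : (∑ t ∈ univ.filter (fun t => it t = i), (pt t - pu (jt t)) * x t) ≤
      ∑ t, (pt t - pu (jt t)) * x t := by
    refine sum_le_sum_of_subset_of_nonneg (filter_subset _ _) fun t _ _ => ?_
    exact mul_nonneg (sub_nonneg.2 (hptpu t)) (hx t).1
  -- cost of proportional bundle
  have hCy : (∑ t ∈ univ.filter (fun t => it t = i), pu (jt t) * y t) =
      f * ∑ j, pu j * s j := by
    rw [← Finset.sum_fiberwise (univ.filter (fun t => it t = i)) jt
      (fun t => pu (jt t) * y t), mul_sum]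
    refine sum_congr rfl fun j _ => ?_
    rw [filter_filter]
    have hconst : ∀ t ∈ univ.filter (fun t => it t = i ∧ jt t = j),
        pu (jt t) * y t = pu j * (s j * f / c j) := by
      intro t ht
      simp only [mem_filter] at ht
      rw [hy]
      simp only
      rw [ht.2.2]
    rw [sum_congr rfl hconst, sum_const, nsmul_eq_mul]
    have : ((univ.filter (fun t => it t = i ∧ jt t = j)).card : ℝ) = c j := rfl
    rw [this]
    field_simp [(hcpos j).ne']
  -- user spend equals pu-weighted allocation
  have hP : (∑ j, pu j * s j) = ∑ t, pu (jt t) * x t := by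
    rw [← Finset.sum_fiberwise univ jt (fun t => pu (jt t) * x t)]
    refine sum_congr rfl fun j _ => ?_
    rw [← hsupply j, mul_sum]
    refine sum_congr rfl fun t ht => ?_
    simp only [mem_filter] at ht
    rw [ht.2]
  -- total spend
  have hspend : (∑ t, pt t * x t) = (∑ k, B k) + Bp := by
    have hterm : ∀ t, pt t * x t = β (it t) * v t * x t + βp * vp t * x t := by
      intro t
      rcases eq_or_lt_of_le (hx t).1 with h | h
      · rw [← h]; ring
      · have := hFeq t h; nlinarith [this]
    rw [sum_congr rfl fun t _ => hterm t, sum_add_distrib]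
    have h1 : (∑ t, β (it t) * v t * x t) = ∑ k, B k := by
      rw [← Finset.sum_fiberwise univ it (fun t => β (it t) * v t * x t)]
      refine sum_congr rfl fun k _ => ?_
      have : (∑ t ∈ univ.filter (fun t => it t = k), β (it t) * v t * x t) =
          β k * ∑ t ∈ univ.filter (fun t => it t = k), v t * x t := by
        rw [mul_sum]
        refine sum_congr rfl fun t ht => ?_
        simp only [mem_filter] at ht
        rw [ht.2]; ring
      rw [this, ← hu k, hβ k, div_mul_cancel₀ _ (hupos k).ne']
    have h2 : (∑ t, βp * vp t * x t) = Bp := by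
      have : (∑ t, βp * vp t * x t) = βp * ∑ t, vp t * x t := by
        rw [mul_sum]; exact sum_congr rfl fun t _ => by ring
      rw [this, ← hup, hβp, div_mul_cancel₀ _ huppos.ne']
    rw [h1, h2]
  -- combine
  have hgapsum : (∑ t, (pt t - pu (jt t)) * x t) =
      (∑ t, pt t * x t) - ∑ t, pu (jt t) * x t := by
    rw [← sum_sub_distrib]; exact sum_congr rfl fun t _ => by ring
  have hfinal : β i * (∑ t ∈ univ.filter (fun t => it t = i), v t * y t) ≤ β i * u i := by
    have hBi : f * ((∑ k, B k) + Bp) = B i := by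
      rw [hf, add_comm Bp, div_mul_cancel₀ _ (by rw [add_comm]; exact hSpos.ne')]
    have hβu : β i * u i = B i := by rw [hβ i, div_mul_cancel₀ _ (hupos i).ne']
    calc β i * (∑ t ∈ univ.filter (fun t => it t = i), v t * y t)
        ≤ (∑ t ∈ univ.filter (fun t => it t = i), pu (jt t) * y t) +
          f * (∑ t ∈ univ.filter (fun t => it t = i), (pt t - pu (jt t)) * x t) := hsum1
      _ ≤ f * (∑ j, pu j * s j) + f * (∑ t, (pt t - pu (jt t)) * x t) := by
          rw [hCy]
          exact add_le_add le_rfl (mul_le_mul_of_nonneg_left hgap hfpos.le)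
      _ = f * (∑ t, pt t * x t) := by rw [hP, hgapsum]; ring
      _ = B i := by rw [hspend, hBi]
      _ = β i * u i := hβu.symm
  have hmain : (∑ t ∈ univ.filter (fun t => it t = i), v t * y t) ≤ u i :=
    le_of_mul_le_mul_left hfinal hβpos
  calc (∑ t ∈ univ.filter (fun t => it t = i),
        v t * (s (jt t) * (B i / (Bp + ∑ k, B k)) /
          ((univ.filter (fun t' => it t' = i ∧ jt t' = jt t)).card : ℝ)))
      = ∑ t ∈ univ.filter (fun t => it t = i), v t * y t := rfl
    _ ≤ u i := hmain
    _ = ∑ t ∈ univ.filter (fun t => it t = i), x t * v t := by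
        rw [hu i]; exact sum_congr rfl fun t _ => by ring
end

section
/- Suppose (x, p, β) is an nFPPE: the first-order conditions (FOC) hold, β_i = B_i/u_i for all i and β_p = B_p/u_p (with u_i > 0 for all i and u_p > 0), p^t − β_{i(t)} v^t ≥ 0 for all t, and Σ_{t ∈ 𝒯_j} x^t = s_j for every user j. Assume |𝒯_j| ≥ s_j for every user j. Let f_p := B_p/(B_p + Σ_{k ∈ [n]} B_k). Then the platform gets at least its proportional utility: Σ_{t ∈ [𝒯]} x^t v_p^t ≥ Σ_{t ∈ [𝒯]} v_p^t · (s_{j(t)} / |𝒯_{j(t)}|) · f_p. -/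
open Finset

/-- **Proportionality of nFPPE for the platform (Proposition 3, second part).**
In an nFPPE, the platform's utility is at least its proportional utility
`∑_t vp t * (s (jt t) / |𝒯_{jt t}|) * f_p` where `f_p = Bp / (Bp + ∑ k, B k)`. -/
theorem nFPPE_proportionality_platform
    (T n m : ℕ)
    (it : Fin T → Fin n) (jt : Fin T → Fin m)
    (v vp : Fin T → ℝ) (x : Fin T → ℝ)
    (B : Fin n → ℝ) (Bp : ℝ) (s : Fin m → ℝ)
    (pu : Fin m → ℝ) (pt : Fin T → ℝ)
    (β : Fin n → ℝ) (βp : ℝ)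
    (u : Fin n → ℝ) (up : ℝ)
    (hv : ∀ t, 0 < v t) (hvp : ∀ t, 0 ≤ vp t)
    (hx : ∀ t, x t ∈ Set.Icc (0 : ℝ) 1)
    (hB : ∀ i, 0 < B i) (hBp : 0 < Bp) (hs : ∀ j, 0 < s j)
    (hpu : ∀ j, 0 ≤ pu j) (hpt : ∀ t, 0 ≤ pt t)
    (hu : ∀ i, u i = ∑ t ∈ univ.filter (fun t => it t = i), v t * x t)
    (hup : up = ∑ t, vp t * x t)
    (hupos : ∀ i, 0 < u i) (huppos : 0 < up)
    (hβ : ∀ i, β i = B i / u i) (hβp : βp = Bp / up)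
    (hnet : ∀ t, 0 ≤ pt t - β (it t) * v t)
    (hsupply : ∀ j, ∑ t ∈ univ.filter (fun t => jt t = j), x t = s j)
    (hcard : ∀ j, s j ≤ ((univ.filter (fun t => jt t = j)).card : ℝ))
    (hFOC : ∀ t,
      (x t = 0 → β (it t) * v t + βp * vp t ≤ pt t ∧ pt t = pu (jt t)) ∧
      (0 < x t → x t < 1 → β (it t) * v t + βp * vp t = pt t ∧ pt t = pu (jt t)) ∧
      (x t = 1 → β (it t) * v t + βp * vp t = pt t ∧ pu (jt t) ≤ pt t)) :
    (∑ t, vp t * (s (jt t) / ((univ.filter (fun t' => jt t' = jt t)).card : ℝ)) *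
        (Bp / (Bp + ∑ k, B k))) ≤
      ∑ t, x t * vp t := by
  classical
  set c : Fin m → ℝ := fun j => ((univ.filter (fun t => jt t = j)).card : ℝ) with hc
  have hcpos : ∀ j, 0 < c j := fun j => lt_of_lt_of_le (hs j) (hcard j)
  set r : Fin T → ℝ := fun t => s (jt t) / c (jt t) with hrdef
  have hβpos : ∀ i, 0 < β i := fun i => (hβ i) ▸ div_pos (hB i) (hupos i)
  have hβppos : 0 < βp := hβp ▸ div_pos hBp huppos
  have hrnn : ∀ t, 0 ≤ r t := fun t => div_nonneg (hs (jt t)).le (hcpos (jt t)).le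
  have hrle1 : ∀ t, r t ≤ 1 := fun t => (div_le_one (hcpos (jt t))).mpr (hcard (jt t))
  have hfoc_le : ∀ t, β (it t) * v t + βp * vp t ≤ pt t := by
    intro t
    rcases eq_or_lt_of_le (hx t).1 with h0 | h0
    · exact ((hFOC t).1 h0.symm).1
    rcases eq_or_lt_of_le (hx t).2 with h1 | h1
    · exact le_of_eq (((hFOC t).2.2 h1).1)
    · exact le_of_eq (((hFOC t).2.1 h0 h1).1)
  have hvp_le : ∀ t, βp * vp t ≤ pt t := by
    intro t
    nlinarith [hfoc_le t, mul_pos (hβpos (it t)) (hv t)]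
  have hkey : ∀ t, pt t * r t ≤ pt t * x t + pu (jt t) * r t - pu (jt t) * x t := by
    intro t
    rcases eq_or_lt_of_le (hx t).2 with h1 | h1
    · have h := ((hFOC t).2.2 h1).2
      rw [h1]
      nlinarith [mul_nonneg (sub_nonneg.mpr h) (sub_nonneg.mpr (hrle1 t))]
    · have hpe : pt t = pu (jt t) := by
        rcases eq_or_lt_of_le (hx t).1 with h0 | h0
        · exact ((hFOC t).1 h0.symm).2
        · exact ((hFOC t).2.1 h0 h1).2
      rw [hpe]
      linarith
  -- fiberwise identity: ∑ pu·r = ∑ pu·x (both equal ∑_j pu_j s_j)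
  have h1sum : ∑ t, pu (jt t) * r t = ∑ t, pu (jt t) * x t := by
    rw [← Finset.sum_fiberwise univ jt (fun t => pu (jt t) * r t),
        ← Finset.sum_fiberwise univ jt (fun t => pu (jt t) * x t)]
    refine Finset.sum_congr rfl fun j _ => ?_
    have hL : ∑ t ∈ univ.filter (fun t => jt t = j), pu (jt t) * r t
        = ∑ _t ∈ univ.filter (fun t => jt t = j), pu j * (s j / c j) := by
      refine Finset.sum_congr rfl fun t ht => ?_
      have hj : jt t = j := (Finset.mem_filter.mp ht).2
      simp only [hrdef, hj]
    have hR : ∑ t ∈ univ.filter (fun t => jt t = j), pu (jt t) * x t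
        = pu j * s j := by
      rw [← hsupply j, Finset.mul_sum]
      refine Finset.sum_congr rfl fun t ht => ?_
      rw [(Finset.mem_filter.mp ht).2]
    rw [hL, hR, Finset.sum_const, nsmul_eq_mul]
    have hcj : ((univ.filter (fun t => jt t = j)).card : ℝ) = c j := by rw [hc]
    rw [hcj]
    have hne : c j ≠ 0 := (hcpos j).ne'
    field_simp
  -- revenue identity
  have h2 : ∑ t, pt t * x t = (∑ i, B i) + Bp := by
    have hpe : ∀ t, pt t * x t = (β (it t) * v t + βp * vp t) * x t := by
      intro t
      rcases eq_or_lt_of_le (hx t).1 with h0 | h0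
      · rw [← h0, mul_zero, mul_zero]
      · rcases eq_or_lt_of_le (hx t).2 with h1 | h1
        · rw [(((hFOC t).2.2 h1).1)]
        · rw [(((hFOC t).2.1 h0 h1).1)]
    calc ∑ t, pt t * x t = ∑ t, (β (it t) * (v t * x t) + βp * (vp t * x t)) := by
          refine Finset.sum_congr rfl fun t _ => ?_
          rw [hpe t]; ring
      _ = (∑ t, β (it t) * (v t * x t)) + βp * ∑ t, vp t * x t := by
          rw [Finset.sum_add_distrib, Finset.mul_sum]
      _ = (∑ i, B i) + Bp := by
          congr 1
          · rw [← Finset.sum_fiberwise univ it (fun t => β (it t) * (v t * x t))]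
            refine Finset.sum_congr rfl fun i _ => ?_
            have hbi : ∑ t ∈ univ.filter (fun t => it t = i), β (it t) * (v t * x t)
                = β i * ∑ t ∈ univ.filter (fun t => it t = i), v t * x t := by
              rw [Finset.mul_sum]
              refine Finset.sum_congr rfl fun t ht => ?_
              rw [(Finset.mem_filter.mp ht).2]
            rw [hbi, ← hu i, hβ i]
            have hne : u i ≠ 0 := (hupos i).ne'
            field_simp
          · rw [← hup, hβp]
            field_simp
  have hS : βp * (∑ t, vp t * r t) ≤ (∑ i, B i) + Bp := by
    have hstep1 : ∑ t, βp * vp t * r t ≤ ∑ t, pt t * r t :=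
      Finset.sum_le_sum fun t _ => mul_le_mul_of_nonneg_right (hvp_le t) (hrnn t)
    have hstep2 : ∑ t, pt t * r t ≤ ∑ t, pt t * x t := by
      have h := Finset.sum_le_sum (fun t (_ : t ∈ (univ : Finset (Fin T))) => hkey t)
      rw [Finset.sum_sub_distrib, Finset.sum_add_distrib] at h
      linarith [h1sum]
    calc βp * (∑ t, vp t * r t) = ∑ t, βp * vp t * r t := by
          rw [Finset.mul_sum]; exact Finset.sum_congr rfl fun t _ => by ring
      _ ≤ ∑ t, pt t * x t := le_trans hstep1 hstep2
      _ = (∑ i, B i) + Bp := h2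
  -- conclude
  have hrhs : ∑ t, x t * vp t = up := by
    rw [hup]; exact Finset.sum_congr rfl fun t _ => mul_comm _ _
  have hD : 0 < Bp + ∑ k, B k :=
    add_pos_of_pos_of_nonneg hBp (Finset.sum_nonneg fun i _ => (hB i).le)
  have hgoal : (∑ t, vp t * r t) * (Bp / (Bp + ∑ k, B k)) ≤ up := by
    rw [hβp] at hS
    have h4 : Bp * (∑ t, vp t * r t) ≤ ((∑ i, B i) + Bp) * up := by
      have h5 := mul_le_mul_of_nonneg_right hS huppos.le
      calc Bp * (∑ t, vp t * r t) = Bp / up * (∑ t, vp t * r t) * up := by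
            field_simp
        _ ≤ ((∑ i, B i) + Bp) * up := h5
    rw [mul_div_assoc', div_le_iff₀ hD]
    nlinarith [h4]
  calc (∑ t, vp t * (s (jt t) / ((univ.filter (fun t' => jt t' = jt t)).card : ℝ)) *
        (Bp / (Bp + ∑ k, B k)))
      = (∑ t, vp t * r t) * (Bp / (Bp + ∑ k, B k)) := by
        rw [← Finset.sum_mul]
    _ ≤ up := hgoal
    _ = ∑ t, x t * vp t := hrhs.symm
end

section
/- Suppose (x, p, β) is an nFPPE as in the proportionality result (FOC hold, β_i = B_i/u_i with u_i > 0, β_p = B_p/u_p with u_p > 0, p^t − β_p v_p^t ≥ 0 for all t, Σ_{t ∈ 𝒯_j} x^t = s_j for every user j, and |𝒯_i ∩ 𝒯_j| ≥ s_j for all i, j). For each i let u̲_i := Σ_{t ∈ 𝒯_i} v^t · (s_{j(t)} · f_i / |𝒯_i ∩ 𝒯_{j(t)}|) with f_i := B_i/(B_p + Σ_{k ∈ [n]} B_k), and assume u̲_i > 0. Then the equilibrium pacing multiplier of every notification type is bounded: β_i ≤ B_i / u̲_i. -/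
open Finset

/-- **Bound on equilibrium pacing multipliers.** In an nFPPE (as in the
proportionality result), if `u̲ i > 0` denotes the proportional utility of
notification type `i`, then the equilibrium pacing multiplier satisfies
`β i ≤ B i / u̲ i`. -/
theorem nFPPE_pacing_multiplier_bound
    (T n m : ℕ)
    (it : Fin T → Fin n) (jt : Fin T → Fin m)
    (v vp : Fin T → ℝ) (x : Fin T → ℝ)
    (B : Fin n → ℝ) (Bp : ℝ) (s : Fin m → ℝ)
    (pu : Fin m → ℝ) (pt : Fin T → ℝ)
    (β : Fin n → ℝ) (βp : ℝ)
    (u : Fin n → ℝ) (up : ℝ) (ulow : Fin n → ℝ)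
    (hv : ∀ t, 0 < v t) (hvp : ∀ t, 0 ≤ vp t)
    (hx : ∀ t, x t ∈ Set.Icc (0 : ℝ) 1)
    (hB : ∀ i, 0 < B i) (hBp : 0 < Bp) (hs : ∀ j, 0 < s j)
    (hpu : ∀ j, 0 ≤ pu j) (hpt : ∀ t, 0 ≤ pt t)
    (hu : ∀ i, u i = ∑ t ∈ univ.filter (fun t => it t = i), v t * x t)
    (hup : up = ∑ t, vp t * x t)
    (hupos : ∀ i, 0 < u i) (huppos : 0 < up)
    (hβ : ∀ i, β i = B i / u i) (hβp : βp = Bp / up)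
    (hsubs : ∀ t, 0 ≤ pt t - βp * vp t)
    (hsupply : ∀ j, ∑ t ∈ univ.filter (fun t => jt t = j), x t = s j)
    (hcard : ∀ i j, s j ≤ ((univ.filter (fun t => it t = i ∧ jt t = j)).card : ℝ))
    (hulow : ∀ i, ulow i = ∑ t ∈ univ.filter (fun t => it t = i),
      v t * (s (jt t) * (B i / (Bp + ∑ k, B k)) /
        ((univ.filter (fun t' => it t' = i ∧ jt t' = jt t)).card : ℝ)))
    (hulowpos : ∀ i, 0 < ulow i)
    (hFOC : ∀ t,
      (x t = 0 → β (it t) * v t + βp * vp t ≤ pt t ∧ pt t = pu (jt t)) ∧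
      (0 < x t → x t < 1 → β (it t) * v t + βp * vp t = pt t ∧ pt t = pu (jt t)) ∧
      (x t = 1 → β (it t) * v t + βp * vp t = pt t ∧ pu (jt t) ≤ pt t)) :
    ∀ i, β i ≤ B i / ulow i := by
  -- positivity of multipliers
  have hβppos : 0 < βp := by rw [hβp]; exact div_pos hBp huppos
  have hβpos : ∀ k, 0 < β k := fun k => by
    rw [hβ k]; exact div_pos (hB k) (hupos k)
  -- FOC consequences
  have key1 : ∀ t, β (it t) * v t + βp * vp t ≤ pt t := by
    intro t
    obtain ⟨h0, h1⟩ := hx t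
    rcases eq_or_lt_of_le h0 with h | h
    · exact ((hFOC t).1 h.symm).1
    · rcases eq_or_lt_of_le h1 with h' | h'
      · exact le_of_eq ((hFOC t).2.2 h').1
      · exact le_of_eq ((hFOC t).2.1 h h').1
  have keyEq : ∀ t, 0 < x t → β (it t) * v t + βp * vp t = pt t := by
    intro t h
    rcases eq_or_lt_of_le (hx t).2 with h' | h'
    · exact ((hFOC t).2.2 h').1
    · exact ((hFOC t).2.1 h h').1
  have keyPu : ∀ t, x t < 1 → pt t = pu (jt t) := by
    intro t h'
    rcases eq_or_lt_of_le (hx t).1 with h | h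
    · exact ((hFOC t).1 h.symm).2
    · exact ((hFOC t).2.1 h h').2
  -- D t : extra payment above user price
  set D : Fin T → ℝ := fun t => (pt t - pu (jt t)) * x t with hDdef
  have hD0 : ∀ t, 0 ≤ D t := by
    intro t
    rcases eq_or_lt_of_le (hx t).2 with h' | h'
    · have h2 := ((hFOC t).2.2 h').2
      simp only [hDdef]
      nlinarith [(hx t).1]
    · simp [hDdef, keyPu t h']
  -- total spend equals total budget
  have sumA : ∑ t, pt t * x t = (∑ k, B k) + Bp := by
    have hterm : ∀ t, pt t * x t = β (it t) * (v t * x t) + βp * (vp t * x t) := by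
      intro t
      rcases eq_or_lt_of_le (hx t).1 with h | h
      · rw [← h]; ring
      · rw [← keyEq t h]; ring
    calc ∑ t, pt t * x t
        = ∑ t, (β (it t) * (v t * x t) + βp * (vp t * x t)) :=
          Finset.sum_congr rfl fun t _ => hterm t
      _ = ∑ t, β (it t) * (v t * x t) + ∑ t, βp * (vp t * x t) :=
          Finset.sum_add_distrib
      _ = (∑ k, B k) + Bp := by
          congr 1
          · rw [← Finset.sum_fiberwise univ it (fun t => β (it t) * (v t * x t))]
            refine Finset.sum_congr rfl fun k _ => ?_
            have : ∑ t ∈ univ.filter (fun t => it t = k), β (it t) * (v t * x t)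
                = ∑ t ∈ univ.filter (fun t => it t = k), β k * (v t * x t) := by
              refine Finset.sum_congr rfl fun t ht => ?_
              rw [(Finset.mem_filter.1 ht).2]
            rw [this, ← Finset.mul_sum, ← hu k, hβ k,
              div_mul_cancel₀ _ (ne_of_gt (hupos k))]
          · rw [← Finset.mul_sum, ← hup, hβp, div_mul_cancel₀ _ (ne_of_gt huppos)]
  -- user revenue plus surcharges equals total budget
  have sumPu : ∑ t, pu (jt t) * x t = ∑ j, pu j * s j := by
    rw [← Finset.sum_fiberwise univ jt (fun t => pu (jt t) * x t)]
    refine Finset.sum_congr rfl fun j _ => ?_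
    have : ∑ t ∈ univ.filter (fun t => jt t = j), pu (jt t) * x t
        = ∑ t ∈ univ.filter (fun t => jt t = j), pu j * x t := by
      refine Finset.sum_congr rfl fun t ht => ?_
      rw [(Finset.mem_filter.1 ht).2]
    rw [this, ← Finset.mul_sum, hsupply j]
  have sumB : ∑ j, pu j * s j + ∑ t, D t = (∑ k, B k) + Bp := by
    rw [← sumPu, ← sumA, ← Finset.sum_add_distrib]
    refine Finset.sum_congr rfl fun t _ => ?_
    simp only [hDdef]; ring
  intro i
  have hsB : (0:ℝ) < ∑ k, B k := Finset.sum_pos (fun k _ => hB k) ⟨i, mem_univ i⟩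
  have hS : (0:ℝ) < Bp + ∑ k, B k := by linarith
  have hfi : (0:ℝ) < B i / (Bp + ∑ k, B k) := div_pos (hB i) hS
  -- the alternative allocation
  set xt : Fin T → ℝ := fun t => s (jt t) * (B i / (Bp + ∑ k, B k)) /
      ((univ.filter (fun t' => it t' = i ∧ jt t' = jt t)).card : ℝ) with hxtdef
  have hcpos : ∀ j, (0:ℝ) < ((univ.filter (fun t' => it t' = i ∧ jt t' = j)).card : ℝ) :=
    fun j => lt_of_lt_of_le (hs j) (hcard i j)
  have hxt0 : ∀ t, 0 ≤ xt t := by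
    intro t
    have h1 := (hs (jt t)).le
    have h2 := (hcpos (jt t)).le
    simp only [hxtdef]
    positivity
  have hxtle : ∀ t, xt t ≤ B i / (Bp + ∑ k, B k) := by
    intro t
    simp only [hxtdef]
    rw [div_le_iff₀ (hcpos (jt t))]
    nlinarith [hcard i (jt t), hs (jt t)]
  -- cost bound for the alternative allocation
  have costTerm : ∀ t, it t = i →
      pt t * xt t ≤ pu (jt t) * xt t + (B i / (Bp + ∑ k, B k)) * D t := by
    intro t _
    rcases eq_or_lt_of_le (hx t).2 with h' | h'
    · have h2 := ((hFOC t).2.2 h').2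
      have hD : D t = pt t - pu (jt t) := by simp [hDdef, h']
      rw [hD]
      nlinarith [hxtle t, hxt0 t]
    · rw [keyPu t h']
      have : D t = 0 := by simp [hDdef, keyPu t h']
      rw [this]; simp
  have costC : ∑ t ∈ univ.filter (fun t => it t = i), pu (jt t) * xt t
      = (B i / (Bp + ∑ k, B k)) * ∑ j, pu j * s j := by
    rw [← Finset.sum_fiberwise (univ.filter (fun t => it t = i)) jt
      (fun t => pu (jt t) * xt t), Finset.mul_sum]
    refine Finset.sum_congr rfl fun j _ => ?_
    have hsub : (univ.filter (fun t => it t = i)).filter (fun t => jt t = j)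
        = univ.filter (fun t' => it t' = i ∧ jt t' = j) := by
      rw [Finset.filter_filter]
    rw [hsub]
    have hconst : ∀ t ∈ univ.filter (fun t' => it t' = i ∧ jt t' = j),
        pu (jt t) * xt t = pu j * (s j * (B i / (Bp + ∑ k, B k)) /
          ((univ.filter (fun t' => it t' = i ∧ jt t' = j)).card : ℝ)) := by
      intro t ht
      have hj : jt t = j := (Finset.mem_filter.1 ht).2.2
      simp only [hxtdef, hj]
    rw [Finset.sum_congr rfl hconst, Finset.sum_const, nsmul_eq_mul]
    have hc := ne_of_gt (hcpos j)
    field_simp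
  have costBound : ∑ t ∈ univ.filter (fun t => it t = i), pt t * xt t ≤ B i := by
    have step1 : ∑ t ∈ univ.filter (fun t => it t = i), pt t * xt t
        ≤ ∑ t ∈ univ.filter (fun t => it t = i),
            (pu (jt t) * xt t + (B i / (Bp + ∑ k, B k)) * D t) :=
      Finset.sum_le_sum fun t ht => costTerm t (Finset.mem_filter.1 ht).2
    have step2 : ∑ t ∈ univ.filter (fun t => it t = i),
          (pu (jt t) * xt t + (B i / (Bp + ∑ k, B k)) * D t)
        = ∑ t ∈ univ.filter (fun t => it t = i), pu (jt t) * xt t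
          + (B i / (Bp + ∑ k, B k)) * ∑ t ∈ univ.filter (fun t => it t = i), D t := by
      rw [Finset.sum_add_distrib, Finset.mul_sum]
    have step3 : ∑ t ∈ univ.filter (fun t => it t = i), D t ≤ ∑ t, D t :=
      Finset.sum_le_sum_of_subset_of_nonneg (Finset.filter_subset _ _)
        (fun t _ _ => hD0 t)
    have step4 : (B i / (Bp + ∑ k, B k)) * ((∑ k, B k) + Bp) = B i := by
      rw [div_mul_eq_mul_div, mul_comm, ← div_mul_eq_mul_div]
      rw [add_comm (∑ k, B k) Bp, div_self (ne_of_gt hS), one_mul]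
    calc ∑ t ∈ univ.filter (fun t => it t = i), pt t * xt t
        ≤ ∑ t ∈ univ.filter (fun t => it t = i), pu (jt t) * xt t
          + (B i / (Bp + ∑ k, B k)) * ∑ t ∈ univ.filter (fun t => it t = i), D t := by
          rw [← step2]; exact step1
      _ ≤ (B i / (Bp + ∑ k, B k)) * ∑ j, pu j * s j
          + (B i / (Bp + ∑ k, B k)) * ∑ t, D t := by
          rw [costC]
          exact add_le_add_right (mul_le_mul_of_nonneg_left step3 hfi.le) _
      _ = (B i / (Bp + ∑ k, B k)) * (∑ j, pu j * s j + ∑ t, D t) := by ring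
      _ = B i := by rw [sumB, step4]
  -- the utility lower bound
  have utilBound : β i * ulow i ≤ ∑ t ∈ univ.filter (fun t => it t = i), pt t * xt t := by
    have h1 : β i * ulow i = ∑ t ∈ univ.filter (fun t => it t = i), β i * (v t * xt t) := by
      rw [hulow i, Finset.mul_sum]
    rw [h1]
    refine Finset.sum_le_sum fun t ht => ?_
    have hit : it t = i := (Finset.mem_filter.1 ht).2
    have h2 : β i * v t ≤ pt t - βp * vp t := by
      have := key1 t
      rw [hit] at this
      linarith
    have h3 : 0 ≤ βp * vp t := mul_nonneg hβppos.le (hvp t)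
    have h4 := hxt0 t
    nlinarith
  have final : β i * ulow i ≤ B i := le_trans utilBound costBound
  rw [le_div_iff₀ (hulowpos i)]
  exact final
end

section
/- Suppose (x, p, β) satisfies the nSPPE conditions (2) and (4): x^t = 1 if β_{i(t)} v^t + β_p v_p^t ≥ p_{j(t)} and x^t = 0 otherwise, and for every notification type i, Σ_{t ∈ 𝒯_i} x^t (p_{j(t)} − β_p v_p^t) = B_i, with β_i > 0 for all i. Then each notification type buys a bundle in its demand set given the subsidized prices: for every i and every vector y with y^t ∈ [0,1] for t ∈ 𝒯_i satisfying Σ_{t ∈ 𝒯_i} y^t (p_{j(t)} − β_p v_p^t) ≤ B_i, it holds that Σ_{t ∈ 𝒯_i} y^t v^t ≤ Σ_{t ∈ 𝒯_i} x^t v^t. -/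
open Finset

/-- **nSPPE notification types buy demand bundles (Proposition 4).** Under nSPPE
conditions (2) (winning bids allocated) and (4) (budgets cleared), with `β i > 0`,
every notification type buys a utility-maximizing bundle given the subsidized
prices: any affordable `y ∈ [0,1]^{𝒯ᵢ}` yields at most the utility of `x`. -/
theorem nSPPE_notif_type_demand
    (T n m : ℕ)
    (it : Fin T → Fin n) (jt : Fin T → Fin m)
    (v vp : Fin T → ℝ) (x : Fin T → ℝ)
    (B : Fin n → ℝ) (Bp : ℝ)
    (pu : Fin m → ℝ)
    (β : Fin n → ℝ) (βp : ℝ)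
    (hv : ∀ t, 0 < v t) (hvp : ∀ t, 0 ≤ vp t)
    (hB : ∀ i, 0 < B i) (hBp : 0 < Bp)
    (hpu : ∀ j, 0 ≤ pu j)
    (hβ : ∀ i, 0 < β i) (hβp : 0 ≤ βp)
    (halloc : ∀ t,
      (pu (jt t) ≤ β (it t) * v t + βp * vp t → x t = 1) ∧
      (β (it t) * v t + βp * vp t < pu (jt t) → x t = 0))
    (hbudget : ∀ i, ∑ t ∈ univ.filter (fun t => it t = i),
      x t * (pu (jt t) - βp * vp t) = B i) :
    ∀ (i : Fin n) (y : Fin T → ℝ),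
      (∀ t, it t = i → y t ∈ Set.Icc (0 : ℝ) 1) →
      (∑ t ∈ univ.filter (fun t => it t = i), y t * (pu (jt t) - βp * vp t)) ≤ B i →
      (∑ t ∈ univ.filter (fun t => it t = i), y t * v t) ≤
        ∑ t ∈ univ.filter (fun t => it t = i), x t * v t := by
  intro i y hy hbud
  set S := univ.filter (fun t => it t = i) with hS
  -- key termwise inequality
  have hkey : ∀ t ∈ S, y t * (β i * v t + βp * vp t - pu (jt t)) ≤
      x t * (β i * v t + βp * vp t - pu (jt t)) := by
    intro t ht
    have hti : it t = i := by simpa [hS] using ht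
    obtain ⟨hy0, hy1⟩ := hy t hti
    rcases le_or_gt (pu (jt t)) (β (it t) * v t + βp * vp t) with h | h
    · have hx := (halloc t).1 h
      rw [hx, hti] at *
      have hnn : 0 ≤ β i * v t + βp * vp t - pu (jt t) := by
        rw [← hti] at h ⊢; linarith
      nlinarith
    · have hx := (halloc t).2 h
      rw [hx, hti] at *
      have hnp : β i * v t + βp * vp t - pu (jt t) ≤ 0 := by
        rw [← hti] at h ⊢; linarith
      nlinarith
  have hsum : ∑ t ∈ S, y t * (β i * v t + βp * vp t - pu (jt t)) ≤
      ∑ t ∈ S, x t * (β i * v t + βp * vp t - pu (jt t)) := Finset.sum_le_sum hkey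
  have expand : ∀ z : Fin T → ℝ, ∑ t ∈ S, z t * (β i * v t + βp * vp t - pu (jt t)) =
      β i * (∑ t ∈ S, z t * v t) - ∑ t ∈ S, z t * (pu (jt t) - βp * vp t) := by
    intro z
    rw [Finset.mul_sum, ← Finset.sum_sub_distrib]
    apply Finset.sum_congr rfl
    intro t _; ring
  rw [expand y, expand x, hbudget i] at hsum
  have hβi := hβ i
  nlinarith [hsum, hbud]
end

section
/- Suppose (x, p, β) satisfies the nSPPE conditions (2)–(5): x^t = 1 if β_{i(t)} v^t + β_p v_p^t ≥ p_{j(t)} and x^t = 0 otherwise; for every user j, Σ_{t ∈ 𝒯_j} x^t ≤ s_j with equality whenever p_j > 0; for every notification type i, Σ_{t ∈ 𝒯_i} x^t (p_{j(t)} − β_p v_p^t) = B_i; and Σ_{t ∈ [𝒯]} x^t β_p v_p^t = B_p; with p_j ≥ 0, β_i > 0 for all i, β_p ≥ 0, and v_p^t ≥ 0. Let f_i := B_i/(B_p + Σ_{k ∈ [n]} B_k). Then each notification type's utility is at least its proportional share utility: for every i and every vector x̄ with x̄^t ∈ [0,1] for t ∈ 𝒯_i satisfying Σ_{t ∈ 𝒯_i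 ∩ 𝒯_j} x̄^t ≤ f_i · s_j for every user j, it holds that Σ_{t ∈ 𝒯_i} x^t v^t ≥ Σ_{t ∈ 𝒯_i} x̄^t v^t. In particular, this holds for the allocation in which type i receives its budget-proportional share f_i of each user's supply allocated to its highest-value opportunities. -/
open Finset

/-- **Proportional share guarantee in nSPPE (Proposition 5).** Under nSPPE
conditions (2)–(5), each notification type's utility is at least its proportional
share utility: for any bundle `x̄ ∈ [0,1]^{𝒯ᵢ}` using at most a fraction
`f i = B i / (Bp + ∑ k, B k)` of each user's supply, the utility of `x` for type `i`
is at least that of `x̄`. -/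
theorem nSPPE_proportional_share
    (T n m : ℕ)
    (it : Fin T → Fin n) (jt : Fin T → Fin m)
    (v vp : Fin T → ℝ) (x : Fin T → ℝ)
    (B : Fin n → ℝ) (Bp : ℝ) (s : Fin m → ℝ)
    (pu : Fin m → ℝ)
    (β : Fin n → ℝ) (βp : ℝ)
    (hv : ∀ t, 0 < v t) (hvp : ∀ t, 0 ≤ vp t)
    (hB : ∀ i, 0 < B i) (hBp : 0 < Bp) (hs : ∀ j, 0 < s j)
    (hpu : ∀ j, 0 ≤ pu j)
    (hβ : ∀ i, 0 < β i) (hβp : 0 ≤ βp)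
    (halloc : ∀ t,
      (pu (jt t) ≤ β (it t) * v t + βp * vp t → x t = 1) ∧
      (β (it t) * v t + βp * vp t < pu (jt t) → x t = 0))
    (hsupply : ∀ j, (∑ t ∈ univ.filter (fun t => jt t = j), x t) ≤ s j ∧
      (0 < pu j → ∑ t ∈ univ.filter (fun t => jt t = j), x t = s j))
    (hbudget : ∀ i, ∑ t ∈ univ.filter (fun t => it t = i),
      x t * (pu (jt t) - βp * vp t) = B i)
    (hbudgetp : ∑ t, x t * (βp * vp t) = Bp) :
    ∀ (i : Fin n) (xbar : Fin T → ℝ),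
      (∀ t, it t = i → xbar t ∈ Set.Icc (0 : ℝ) 1) →
      (∀ j, (∑ t ∈ univ.filter (fun t => it t = i ∧ jt t = j), xbar t) ≤
        (B i / (Bp + ∑ k, B k)) * s j) →
      (∑ t ∈ univ.filter (fun t => it t = i), xbar t * v t) ≤
        ∑ t ∈ univ.filter (fun t => it t = i), x t * v t := by

  intro i xbar hbar hfrac
  have hden : 0 < Bp + ∑ k, B k := by
    have : (0:ℝ) ≤ ∑ k, B k := Finset.sum_nonneg fun k _ => (hB k).le
    linarith
  set fi : ℝ := B i / (Bp + ∑ k, B k) with hfi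
  have hfiB : fi * (Bp + ∑ k, B k) = B i := div_mul_cancel₀ _ hden.ne'
  set S : Finset (Fin T) := univ.filter (fun t => it t = i) with hSdef
  -- pointwise key inequality
  have key : ∀ t ∈ S, β i * (xbar t * v t) ≤
      xbar t * pu (jt t) + x t * (β (it t) * v t + βp * vp t - pu (jt t)) := by
    intro t ht
    have hit : it t = i := by simpa using (Finset.mem_filter.mp ht).2
    obtain ⟨hx1, hx0⟩ := halloc t
    obtain ⟨hxb0, hxb1⟩ := hbar t hit
    have hvpn : (0:ℝ) ≤ βp * vp t := mul_nonneg hβp (hvp t)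
    rw [hit] at hx1 hx0 ⊢
    rcases le_or_gt (pu (jt t)) (β i * v t + βp * vp t) with h | h
    · rw [hx1 h]
      nlinarith [mul_nonneg (by linarith : (0:ℝ) ≤ 1 - xbar t)
        (by linarith : (0:ℝ) ≤ β i * v t + βp * vp t - pu (jt t)),
        mul_nonneg hxb0 hvpn]
    · rw [hx0 h]
      nlinarith [mul_nonneg hxb0 (by linarith : (0:ℝ) ≤ pu (jt t) - β i * v t)]
  have h1 : β i * ∑ t ∈ S, xbar t * v t ≤
      (∑ t ∈ S, xbar t * pu (jt t)) +
      ∑ t ∈ S, x t * (β (it t) * v t + βp * vp t - pu (jt t)) := by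
    rw [Finset.mul_sum, ← Finset.sum_add_distrib]
    exact Finset.sum_le_sum key
  have h2 : ∑ t ∈ S, x t * (β (it t) * v t + βp * vp t - pu (jt t)) =
      β i * (∑ t ∈ S, x t * v t) - B i := by
    rw [Finset.mul_sum, ← hbudget i, ← Finset.sum_sub_distrib]
    refine Finset.sum_congr rfl fun t ht => ?_
    have hit : it t = i := by simpa using (Finset.mem_filter.mp ht).2
    rw [hit]; ring
  have h4 : ∑ j, pu j * s j = (∑ k, B k) + Bp := by
    have hps : ∀ j, pu j * s j = pu j * ∑ t ∈ univ.filter (fun t => jt t = j), x t := by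
      intro j
      rcases eq_or_lt_of_le (hpu j) with h | h
      · rw [← h]; ring
      · rw [(hsupply j).2 h]
    calc ∑ j, pu j * s j
        = ∑ j, ∑ t ∈ univ.filter (fun t => jt t = j), x t * pu (jt t) := by
          refine Finset.sum_congr rfl fun j _ => ?_
          rw [hps j, Finset.mul_sum]
          refine Finset.sum_congr rfl fun t ht => ?_
          rw [(Finset.mem_filter.mp ht).2]; ring
      _ = ∑ t, x t * pu (jt t) := Finset.sum_fiberwise _ _ _
      _ = (∑ t, x t * (pu (jt t) - βp * vp t)) + ∑ t, x t * (βp * vp t) := by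
          rw [← Finset.sum_add_distrib]
          exact Finset.sum_congr rfl fun t _ => by ring
      _ = (∑ k, B k) + Bp := by
          rw [hbudgetp]
          congr 1
          rw [← Finset.sum_fiberwise univ it (fun t => x t * (pu (jt t) - βp * vp t))]
          exact Finset.sum_congr rfl fun k _ => hbudget k
  have h3 : ∑ t ∈ S, xbar t * pu (jt t) ≤ B i := by
    calc ∑ t ∈ S, xbar t * pu (jt t)
        = ∑ j, ∑ t ∈ S.filter (fun t => jt t = j), xbar t * pu (jt t) :=
          (Finset.sum_fiberwise _ _ _).symm
      _ = ∑ j, pu j * ∑ t ∈ univ.filter (fun t => it t = i ∧ jt t = j), xbar t := by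
          refine Finset.sum_congr rfl fun j _ => ?_
          rw [Finset.mul_sum, hSdef, Finset.filter_filter]
          refine Finset.sum_congr rfl fun t ht => ?_
          rw [(Finset.mem_filter.mp ht).2.2]; ring
      _ ≤ ∑ j, pu j * (fi * s j) := by
          refine Finset.sum_le_sum fun j _ => ?_
          exact mul_le_mul_of_nonneg_left (hfrac j) (hpu j)
      _ = fi * ∑ j, pu j * s j := by
          rw [Finset.mul_sum]; exact Finset.sum_congr rfl fun j _ => by ring
      _ = B i := by rw [h4, ← hfiB]; ring
  have hfin : β i * ∑ t ∈ S, xbar t * v t ≤ β i * ∑ t ∈ S, x t * v t := by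
    rw [h2] at h1; linarith
  exact le_of_mul_le_mul_left hfin (hβ i)
end

section
/- Strong duality for the Eisenberg–Gale program: assume every 𝒯_i is nonempty, s_j > 0 for all j, v^t > 0 for all t, and there exists t with v_p^t > 0. Then the supremum, over feasible allocations x (x^t ∈ [0,1], Σ_{t ∈ 𝒯_j} x^t ≤ s_j) with u_i(x) > 0 for all i and u_p(x) > 0, of Σ_{i ∈ [n]} B_i log u_i(x) + B_p log u_p(x), equals the infimum, over p ∈ ℝ_{≥0}^m, λ ∈ ℝ_{≥0}^{𝒯}, β_i > 0, β_p > 0 with p_{j(t)} ≥ β_{i(t)} v^t + β_p v_p^t − λ^t for all t, of Σ_{j ∈ [m]} s_j p_j + Σ_{t ∈ [𝒯]} λ^t − Σ_{i ∈ [n]} B_i log β_i − B_p log β_p + Σ_{i ∈ [n]} (B_i log B_i − B_i) + (B_p log B_p − B_p). -/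
set_option maxHeartbeats 1000000

open Finset

lemma aux_log_le (Bq β u : ℝ) (hB : 0 < Bq) (hβ : 0 < β) (hu : 0 < u) :
    Bq * Real.log u ≤ β * u + (Bq * Real.log Bq - Bq) - Bq * Real.log β := by
  have h : Real.log (β * u / Bq) ≤ β * u / Bq - 1 :=
    Real.log_le_sub_one_of_pos (by positivity)
  rw [Real.log_div (by positivity) (by positivity), Real.log_mul (by positivity) (by positivity)] at h
  have := mul_le_mul_of_nonneg_left h hB.le
  have hBne : Bq ≠ 0 := hB.ne'
  rw [mul_sub, mul_sub, mul_div_cancel₀ _ hBne] at this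
  nlinarith [this]

lemma aux_weak (T n m : ℕ)
    (it : Fin T → Fin n) (jt : Fin T → Fin m)
    (v vp : Fin T → ℝ) (B : Fin n → ℝ) (Bp : ℝ) (s : Fin m → ℝ)
    (hB : ∀ i, 0 < B i) (hBp : 0 < Bp)
    (x : Fin T → ℝ) (p : Fin m → ℝ) (lam : Fin T → ℝ) (β : Fin n → ℝ) (βp : ℝ)
    (hx : ∀ t, x t ∈ Set.Icc (0 : ℝ) 1)
    (hxs : ∀ j, ∑ t ∈ univ.filter (fun t => jt t = j), x t ≤ s j)
    (hui : ∀ i, 0 < ∑ t ∈ univ.filter (fun t => it t = i), v t * x t)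
    (hup : 0 < ∑ t, vp t * x t)
    (hp : ∀ j, 0 ≤ p j) (hlam : ∀ t, 0 ≤ lam t) (hβ : ∀ i, 0 < β i) (hβp : 0 < βp)
    (hfeas : ∀ t, β (it t) * v t + βp * vp t - lam t ≤ p (jt t)) :
    (∑ i, B i * Real.log (∑ t ∈ univ.filter (fun t => it t = i), v t * x t)) +
        Bp * Real.log (∑ t, vp t * x t) ≤
      (∑ j, s j * p j) + (∑ t, lam t)
        - (∑ i, B i * Real.log (β i)) - Bp * Real.log βp
        + (∑ i, (B i * Real.log (B i) - B i)) + (Bp * Real.log Bp - Bp) := by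
  classical
  set u : Fin n → ℝ := fun i => ∑ t ∈ univ.filter (fun t => it t = i), v t * x t with hu
  set up : ℝ := ∑ t, vp t * x t with hupd
  -- termwise log bound
  have h1 : ∀ i, B i * Real.log (u i) ≤
      β i * u i + (B i * Real.log (B i) - B i) - B i * Real.log (β i) :=
    fun i => aux_log_le (B i) (β i) (u i) (hB i) (hβ i) (hui i)
  have h2 : Bp * Real.log up ≤ βp * up + (Bp * Real.log Bp - Bp) - Bp * Real.log βp :=
    aux_log_le Bp βp up hBp hβp hup
  -- the linear part:  ∑ i, β i * u i + βp * up ≤ ∑ j, s j * p j + ∑ t, lam t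
  have hlin : (∑ i, β i * u i) + βp * up ≤ (∑ j, s j * p j) + (∑ t, lam t) := by
    have e1 : ∑ i, β i * u i = ∑ t, β (it t) * (v t * x t) := by
      rw [hu]
      rw [← Finset.sum_fiberwise univ it (fun t => β (it t) * (v t * x t))]
      refine Finset.sum_congr rfl fun i _ => ?_
      rw [Finset.mul_sum]
      refine Finset.sum_congr rfl fun t ht => ?_
      rw [(Finset.mem_filter.mp ht).2]
    have e2 : βp * up = ∑ t, βp * (vp t * x t) := by rw [hupd, Finset.mul_sum]
    have e3 : (∑ i, β i * u i) + βp * up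
        = ∑ t, (β (it t) * v t + βp * vp t) * x t := by
      rw [e1, e2, ← Finset.sum_add_distrib]
      exact Finset.sum_congr rfl fun t _ => by ring
    rw [e3]
    have step1 : ∑ t, (β (it t) * v t + βp * vp t) * x t
        ≤ ∑ t, (p (jt t) + lam t) * x t := by
      apply Finset.sum_le_sum
      intro t _
      have := hfeas t
      have hx0 := (hx t).1
      nlinarith
    have step2 : ∑ t, (p (jt t) + lam t) * x t
        ≤ (∑ t, p (jt t) * x t) + ∑ t, lam t := by
      rw [← Finset.sum_add_distrib]
      apply Finset.sum_le_sum
      intro t _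
      have hx01 := hx t
      have := hlam t
      nlinarith [hx01.1, hx01.2]
    have step3 : ∑ t, p (jt t) * x t ≤ ∑ j, s j * p j := by
      rw [← Finset.sum_fiberwise univ jt (fun t => p (jt t) * x t)]
      apply Finset.sum_le_sum
      intro j _
      have : ∑ t ∈ univ.filter (fun t => jt t = j), p (jt t) * x t
          = p j * ∑ t ∈ univ.filter (fun t => jt t = j), x t := by
        rw [Finset.mul_sum]
        refine Finset.sum_congr rfl fun t ht => ?_
        rw [(Finset.mem_filter.mp ht).2]
      rw [this, mul_comm (s j) (p j)]
      exact mul_le_mul_of_nonneg_left (hxs j) (hp j)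
    linarith
  have hsum1 : ∑ i, B i * Real.log (u i)
      ≤ (∑ i, β i * u i) + (∑ i, (B i * Real.log (B i) - B i)) - ∑ i, B i * Real.log (β i) := by
    have := Finset.sum_le_sum (fun i (_ : i ∈ univ) => h1 i)
    simpa [Finset.sum_add_distrib, Finset.sum_sub_distrib] using this
  linarith

lemma aux_deriv {g : ℝ → ℝ} {d : ℝ} (hg : HasDerivAt g d 0) (hd : 0 < d) :
    ∃ θ : ℝ, 0 < θ ∧ θ < 1 ∧ g 0 < g θ := by
  have h := hasDerivAt_iff_tendsto_slope.mp hg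
  have h2 : Filter.Tendsto (slope g 0) (nhdsWithin 0 (Set.Ioo 0 1)) (nhds d) :=
    h.mono_left (nhdsWithin_mono 0 (by intro x hx; exact ne_of_gt hx.1))
  have h3 : ∀ᶠ θ in nhdsWithin 0 (Set.Ioo 0 1), 0 < slope g 0 θ :=
    h2.eventually (eventually_gt_nhds hd)
  have h4 : ∀ᶠ θ in nhdsWithin 0 (Set.Ioo 0 1), θ ∈ Set.Ioo (0:ℝ) 1 :=
    eventually_mem_nhdsWithin
  have hne : (nhdsWithin (0:ℝ) (Set.Ioo 0 1)).NeBot := by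
    rw [nhdsWithin_Ioo_eq_nhdsGT (by norm_num : (0:ℝ) < 1)]
    exact nhdsGT_neBot 0
  obtain ⟨θ, hθs, hθm⟩ := (h3.and h4).exists
  refine ⟨θ, hθm.1, hθm.2, ?_⟩
  rw [slope_def_field] at hθs
  have := mul_pos hθs (sub_pos.mpr hθm.1 : (0:ℝ) < θ - 0)
  rw [div_mul_cancel₀] at this
  · linarith
  · simpa using (sub_pos.mpr hθm.1).ne'

lemma aux_foc (T n m : ℕ)
    (it : Fin T → Fin n) (jt : Fin T → Fin m)
    (v vp : Fin T → ℝ) (B : Fin n → ℝ) (Bp : ℝ) (s : Fin m → ℝ)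
    (hv : ∀ t, 0 < v t) (hvp : ∀ t, 0 ≤ vp t)
    (hB : ∀ i, 0 < B i) (hBp : 0 < Bp)
    (xs : Fin T → ℝ)
    (hxsI : ∀ t, xs t ∈ Set.Icc (0 : ℝ) 1)
    (hxssup : ∀ j, ∑ t ∈ univ.filter (fun t => jt t = j), xs t ≤ s j)
    (hxsu : ∀ i, 0 < ∑ t ∈ univ.filter (fun t => it t = i), v t * xs t)
    (hxsup : 0 < ∑ t, vp t * xs t)
    (hmax : ∀ x : Fin T → ℝ, (∀ t, x t ∈ Set.Icc (0 : ℝ) 1) →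
        (∀ j, ∑ t ∈ univ.filter (fun t => jt t = j), x t ≤ s j) →
        (∀ i, 0 < ∑ t ∈ univ.filter (fun t => it t = i), v t * x t) →
        (0 < ∑ t, vp t * x t) →
        (∑ i, B i * Real.log (∑ t ∈ univ.filter (fun t => it t = i), v t * x t)) +
            Bp * Real.log (∑ t, vp t * x t) ≤
          (∑ i, B i * Real.log (∑ t ∈ univ.filter (fun t => it t = i), v t * xs t)) +
            Bp * Real.log (∑ t, vp t * xs t))
    (x' : Fin T → ℝ)
    (hx'I : ∀ t, x' t ∈ Set.Icc (0 : ℝ) 1)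
    (hx'sup : ∀ j, ∑ t ∈ univ.filter (fun t => jt t = j), x' t ≤ s j) :
    ∑ t, (B (it t) / (∑ r ∈ univ.filter (fun r => it r = it t), v r * xs r) * v t
            + Bp / (∑ r, vp r * xs r) * vp t) * x' t ≤
      ∑ t, (B (it t) / (∑ r ∈ univ.filter (fun r => it r = it t), v r * xs r) * v t
            + Bp / (∑ r, vp r * xs r) * vp t) * xs t := by
  classical
  set u : Fin n → (Fin T → ℝ) → ℝ :=
    fun i x => ∑ t ∈ univ.filter (fun t => it t = i), v t * x t with hudef
  set up : (Fin T → ℝ) → ℝ := fun x => ∑ t, vp t * x t with hupdef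
  set c : Fin T → ℝ := fun t => B (it t) / u (it t) xs * v t + Bp / up xs * vp t with hcdef
  show ∑ t, c t * x' t ≤ ∑ t, c t * xs t
  by_contra hcon
  push_neg at hcon
  set a : Fin n → ℝ := fun i => u i xs with ha
  set b : Fin n → ℝ := fun i => u i x' - u i xs with hb
  set ap : ℝ := up xs with hap
  set bp : ℝ := up x' - up xs with hbp
  have hapos : ∀ i, 0 < a i := hxsu
  have happos : 0 < ap := hxsup
  have hux'nn : ∀ i, 0 ≤ u i x' := fun i =>
    Finset.sum_nonneg fun t _ => mul_nonneg (hv t).le (hx'I t).1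
  have hupx'nn : 0 ≤ up x' :=
    Finset.sum_nonneg fun t _ => mul_nonneg (hvp t) (hx'I t).1
  set g : ℝ → ℝ := fun θ =>
    (∑ i, B i * Real.log (a i + θ * b i)) + Bp * Real.log (ap + θ * bp) with hg
  -- derivative
  have hterm : ∀ i : Fin n, HasDerivAt (fun θ : ℝ => B i * Real.log (a i + θ * b i))
      (B i * (b i / a i)) 0 := by
    intro i
    have h0 : HasDerivAt (fun θ : ℝ => θ * b i) (b i) 0 := by
      simpa using (hasDerivAt_id (0:ℝ)).mul_const (b i)
    have h1 : HasDerivAt (fun θ : ℝ => a i + θ * b i) (b i) 0 := h0.const_add (a i)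
    have h2 : HasDerivAt (fun θ : ℝ => Real.log (a i + θ * b i))
        (b i / (a i + 0 * b i)) 0 := h1.log (by simpa using (hapos i).ne')
    simpa using h2.const_mul (B i)
  have htermp : HasDerivAt (fun θ : ℝ => Bp * Real.log (ap + θ * bp))
      (Bp * (bp / ap)) 0 := by
    have h0 : HasDerivAt (fun θ : ℝ => θ * bp) bp 0 := by
      simpa using (hasDerivAt_id (0:ℝ)).mul_const bp
    have h1 : HasDerivAt (fun θ : ℝ => ap + θ * bp) bp 0 := h0.const_add ap
    have h2 : HasDerivAt (fun θ : ℝ => Real.log (ap + θ * bp))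
        (bp / (ap + 0 * bp)) 0 := h1.log (by simpa using happos.ne')
    simpa using h2.const_mul Bp
  have hgderiv : HasDerivAt g ((∑ i, B i * (b i / a i)) + Bp * (bp / ap)) 0 := by
    rw [hg]
    exact (HasDerivAt.fun_sum fun i _ => hterm i).add htermp
  -- linearity helpers
  have husub : ∀ (i : Fin n) (y z : Fin T → ℝ),
      u i y - u i z = ∑ t ∈ univ.filter (fun t => it t = i), v t * (y t - z t) := by
    intro i y z
    simp only [hudef]
    rw [← Finset.sum_sub_distrib]
    exact Finset.sum_congr rfl fun t _ => by ring
  have hupsub : ∀ (y z : Fin T → ℝ), up y - up z = ∑ t, vp t * (y t - z t) := by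
    intro y z
    simp only [hupdef]
    rw [← Finset.sum_sub_distrib]
    exact Finset.sum_congr rfl fun t _ => by ring
  -- derivative equals the LP gap
  have hident : (∑ i, B i * (b i / a i)) + Bp * (bp / ap)
      = (∑ t, c t * x' t) - ∑ t, c t * xs t := by
    have e1 : ∀ i, B i * (b i / a i)
        = ∑ t ∈ univ.filter (fun t => it t = i),
            B (it t) / u (it t) xs * v t * (x' t - xs t) := by
      intro i
      have hbi : b i = ∑ t ∈ univ.filter (fun t => it t = i), v t * (x' t - xs t) :=
        husub i x' xs
      have hre : B i * (b i / a i) = (B i / a i) * b i := by ring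
      rw [hre, hbi, Finset.mul_sum]
      refine Finset.sum_congr rfl fun t ht => ?_
      have hit : it t = i := (Finset.mem_filter.mp ht).2
      rw [hit]
      have haa : a i = u i xs := rfl
      rw [haa]
      ring
    have e2 : ∑ i, B i * (b i / a i)
        = ∑ t, B (it t) / u (it t) xs * v t * (x' t - xs t) := by
      rw [Finset.sum_congr rfl fun i _ => e1 i]
      exact Finset.sum_fiberwise univ it _
    have e3 : Bp * (bp / ap) = ∑ t, Bp / up xs * vp t * (x' t - xs t) := by
      have hre : Bp * (bp / ap) = (Bp / ap) * bp := by ring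
      rw [hre, hbp, hap, hupsub x' xs, Finset.mul_sum]
      exact Finset.sum_congr rfl fun t _ => by ring
    rw [e2, e3, ← Finset.sum_add_distrib, ← Finset.sum_sub_distrib]
    refine Finset.sum_congr rfl fun t _ => ?_
    simp only [hcdef]
    ring
  rw [hident] at hgderiv
  obtain ⟨θ, hθ0, hθ1, hgθ⟩ := aux_deriv hgderiv (by linarith)
  -- the perturbed point
  set xθ : Fin T → ℝ := fun t => xs t + θ * (x' t - xs t) with hxθ
  have hulin : ∀ i, u i xθ = a i + θ * b i := by
    intro i
    have h1 : u i xθ - u i xs = ∑ t ∈ univ.filter (fun t => it t = i), v t * (xθ t - xs t) :=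
      husub i xθ xs
    have h2 : ∑ t ∈ univ.filter (fun t => it t = i), v t * (xθ t - xs t)
        = θ * ∑ t ∈ univ.filter (fun t => it t = i), v t * (x' t - xs t) := by
      rw [Finset.mul_sum]
      refine Finset.sum_congr rfl fun t _ => ?_
      simp only [hxθ]
      ring
    rw [h2, ← husub i x' xs] at h1
    rw [ha, hb]
    dsimp only
    linarith
  have huplin : up xθ = ap + θ * bp := by
    have h1 : up xθ - up xs = ∑ t, vp t * (xθ t - xs t) := hupsub xθ xs
    have h2 : ∑ t, vp t * (xθ t - xs t) = θ * ∑ t, vp t * (x' t - xs t) := by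
      rw [Finset.mul_sum]
      refine Finset.sum_congr rfl fun t _ => ?_
      simp only [hxθ]
      ring
    rw [h2, ← hupsub x' xs] at h1
    rw [hap, hbp]
    linarith
  -- feasibility of xθ
  have hxθI : ∀ t, xθ t ∈ Set.Icc (0:ℝ) 1 := by
    intro t
    have h1 := hxsI t
    have h2 := hx'I t
    constructor
    · simp only [hxθ]; nlinarith [h1.1, h2.1]
    · simp only [hxθ]; nlinarith [h1.2, h2.2]
  have hxθsup : ∀ j, ∑ t ∈ univ.filter (fun t => jt t = j), xθ t ≤ s j := by
    intro j
    have e : ∑ t ∈ univ.filter (fun t => jt t = j), xθ t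
        = (1 - θ) * (∑ t ∈ univ.filter (fun t => jt t = j), xs t)
          + θ * ∑ t ∈ univ.filter (fun t => jt t = j), x' t := by
      rw [Finset.mul_sum, Finset.mul_sum, ← Finset.sum_add_distrib]
      refine Finset.sum_congr rfl fun t _ => ?_
      simp only [hxθ]
      ring
    rw [e]
    nlinarith [mul_le_mul_of_nonneg_left (hxssup j) (by linarith : (0:ℝ) ≤ 1 - θ),
      mul_le_mul_of_nonneg_left (hx'sup j) hθ0.le]
  have hxθu : ∀ i, 0 < u i xθ := by
    intro i
    rw [hulin i]
    have : a i + θ * b i = (1 - θ) * a i + θ * u i x' := by simp only [hb]; ring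
    rw [this]
    nlinarith [hapos i, hux'nn i]
  have hxθup : 0 < up xθ := by
    rw [huplin]
    have : ap + θ * bp = (1 - θ) * ap + θ * up x' := by simp only [hbp]; ring
    rw [this]
    nlinarith [happos, hupx'nn]
  -- contradiction
  have hfθ := hmax xθ hxθI hxθsup hxθu hxθup
  have hfθ2 : (∑ i, B i * Real.log (u i xθ)) + Bp * Real.log (up xθ)
      ≤ (∑ i, B i * Real.log (u i xs)) + Bp * Real.log (up xs) := hfθ
  have hgθval : g θ = (∑ i, B i * Real.log (u i xθ)) + Bp * Real.log (up xθ) := by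
    simp only [hg, huplin, hulin]
  have hg0val : g 0 = (∑ i, B i * Real.log (u i xs)) + Bp * Real.log (up xs) := by
    simp only [hg, ha, hap, zero_mul, add_zero]
  linarith [hfθ2, hgθ, hgθval, hg0val]

lemma aux_user {T : ℕ} (S : Finset (Fin T)) (c x : Fin T → ℝ) (s : ℝ)
    (hc : ∀ t ∈ S, 0 < c t) (hx0 : ∀ t ∈ S, 0 ≤ x t) (hx1 : ∀ t ∈ S, x t ≤ 1)
    (hsup : ∑ t ∈ S, x t ≤ s)
    (hopt : ∀ y : Fin T → ℝ, (∀ t ∈ S, 0 ≤ y t) → (∀ t ∈ S, y t ≤ 1) → (∑ t ∈ S, y t ≤ s) →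
      ∑ t ∈ S, c t * y t ≤ ∑ t ∈ S, c t * x t) :
    ∃ p : ℝ, 0 ≤ p ∧ s * p + ∑ t ∈ S, max 0 (c t - p) ≤ ∑ t ∈ S, c t * x t := by
  classical
  -- Fact A: if the supply constraint is slack, every x t = 1
  have factA : (∑ t ∈ S, x t) < s → ∀ t ∈ S, x t = 1 := by
    intro hlt t ht
    by_contra hne
    have hlt1 : x t < 1 := lt_of_le_of_ne (hx1 t ht) hne
    set δ : ℝ := min (1 - x t) (s - ∑ r ∈ S, x r) with hδ
    have hδpos : 0 < δ := lt_min (by linarith) (by linarith)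
    have hδ1 : δ ≤ 1 - x t := min_le_left _ _
    have hδ2 : δ ≤ s - ∑ r ∈ S, x r := min_le_right _ _
    set y : Fin T → ℝ := fun r => x r + (if r = t then δ else 0) with hy
    have hsY : ∑ r ∈ S, y r = (∑ r ∈ S, x r) + δ := by
      rw [hy]; rw [Finset.sum_add_distrib, Finset.sum_ite_eq' S t (fun _ => δ)]
      simp [ht]
    have hval : ∑ r ∈ S, c r * y r = (∑ r ∈ S, c r * x r) + c t * δ := by
      have h1 : ∀ r ∈ S, c r * y r = c r * x r + (if r = t then c t * δ else 0) := by
        intro r hr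
        rw [hy]
        by_cases h : r = t
        · subst h; simp; ring
        · simp [h]
      rw [Finset.sum_congr rfl h1, Finset.sum_add_distrib, Finset.sum_ite_eq' S t (fun _ => c t * δ)]
      simp [ht]
    have hbd := hopt y
      (fun r hr => by
        show 0 ≤ x r + if r = t then δ else 0
        split <;> [linarith [hx0 r hr, hδpos.le]; simp [hx0 r hr]])
      (fun r hr => by
        show (x r + if r = t then δ else 0) ≤ 1
        split
        · rename_i h; subst h; linarith
        · simp [hx1 r hr])
      (by rw [hsY]; linarith)
    rw [hval] at hbd
    nlinarith [hc t ht]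
  -- Fact B: exchange argument
  have factB : ∀ t ∈ S, ∀ t' ∈ S, 0 < x t → x t' < 1 → c t' ≤ c t := by
    intro t ht t' ht' hxt hxt'
    by_contra hltc
    push_neg at hltc
    have htne : t ≠ t' := by rintro rfl; exact absurd rfl (ne_of_lt hltc)
    set δ : ℝ := min (x t) (1 - x t') with hδ
    have hδpos : 0 < δ := lt_min hxt (by linarith)
    have hδ1 : δ ≤ x t := min_le_left _ _
    have hδ2 : δ ≤ 1 - x t' := min_le_right _ _
    set y : Fin T → ℝ := fun r => x r + (if r = t' then δ else 0) - (if r = t then δ else 0) with hy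
    have hsY : ∑ r ∈ S, y r = ∑ r ∈ S, x r := by
      rw [hy]
      rw [Finset.sum_sub_distrib, Finset.sum_add_distrib,
        Finset.sum_ite_eq' S t' (fun _ => δ), Finset.sum_ite_eq' S t (fun _ => δ)]
      simp [ht, ht']
    have hval : ∑ r ∈ S, c r * y r = (∑ r ∈ S, c r * x r) + δ * (c t' - c t) := by
      have h1 : ∀ r ∈ S, c r * y r
          = c r * x r + (if r = t' then c t' * δ else 0) - (if r = t then c t * δ else 0) := by
        intro r hr
        rw [hy]
        by_cases h1 : r = t'
        · subst h1; simp [htne, Ne.symm htne]; ring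
        · by_cases h2 : r = t
          · subst h2; simp [h1]; ring
          · simp [h1, h2]
      rw [Finset.sum_congr rfl h1, Finset.sum_sub_distrib, Finset.sum_add_distrib,
        Finset.sum_ite_eq' S t' (fun _ => c t' * δ), Finset.sum_ite_eq' S t (fun _ => c t * δ)]
      simp [ht, ht']; ring
    have hbd := hopt y
      (fun r hr => by
        show 0 ≤ x r + (if r = t' then δ else 0) - (if r = t then δ else 0)
        by_cases h1 : r = t'
        · subst h1; simp [Ne.symm htne]; linarith [hx0 r hr]
        · by_cases h2 : r = t
          · subst h2; simp [h1]; linarith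
          · simp [h1, h2]; exact hx0 r hr)
      (fun r hr => by
        show x r + (if r = t' then δ else 0) - (if r = t then δ else 0) ≤ 1
        by_cases h1 : r = t'
        · subst h1; simp [Ne.symm htne]; linarith
        · by_cases h2 : r = t
          · subst h2; simp [h1]; linarith [hx1 r hr]
          · simp [h1, h2]; exact hx1 r hr)
      (by rw [hsY]; exact hsup)
    rw [hval] at hbd
    nlinarith
  -- Main case analysis
  by_cases hall : ∀ t ∈ S, x t = 1
  · refine ⟨0, le_refl 0, ?_⟩
    have he : ∑ t ∈ S, max 0 (c t - 0) = ∑ t ∈ S, c t * x t := by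
      apply Finset.sum_congr rfl
      intro t ht
      rw [hall t ht, sub_zero, mul_one, max_eq_right (hc t ht).le]
    rw [he]; linarith
  · push_neg at hall
    obtain ⟨t0, ht0S, ht0⟩ := hall
    have hxt0 : x t0 < 1 := lt_of_le_of_ne (hx1 t0 ht0S) ht0
    have heq : ∑ t ∈ S, x t = s := by
      rcases lt_or_eq_of_le hsup with h | h
      · exact absurd (factA h t0 ht0S) ht0
      · exact h
    set S' : Finset (Fin T) := S.filter (fun t => x t < 1) with hS'
    have hS'ne : S'.Nonempty := ⟨t0, by simp [hS', ht0S, hxt0]⟩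
    set p : ℝ := S'.sup' hS'ne c with hp
    obtain ⟨t1, ht1, ht1e⟩ := S'.exists_mem_eq_sup' hS'ne c
    have ht1S : t1 ∈ S := (Finset.mem_filter.mp ht1).1
    have ht1lt : x t1 < 1 := (Finset.mem_filter.mp ht1).2
    have hpe : p = c t1 := by rw [hp, ht1e]
    have hppos : 0 < p := by rw [hpe]; exact hc t1 ht1S
    refine ⟨p, hppos.le, ?_⟩
    have key : ∀ t ∈ S, max 0 (c t - p) ≤ (c t - p) * x t := by
      intro t ht
      rcases eq_or_lt_of_le (hx1 t ht) with h1 | h1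
      · have hcge : p ≤ c t := by
          rw [hpe]; exact factB t ht t1 ht1S (by rw [h1]; norm_num) ht1lt
        rw [h1, mul_one, max_eq_right (by linarith)]
      · have hcle : c t ≤ p := Finset.le_sup' c (Finset.mem_filter.mpr ⟨ht, h1⟩)
        rcases eq_or_lt_of_le (hx0 t ht) with h0 | h0
        · rw [← h0, mul_zero, max_eq_left (by linarith)]
        · have hcge : p ≤ c t := by
            rw [hpe]; exact factB t ht t1 ht1S h0 ht1lt
          have hce : c t = p := le_antisymm hcle hcge
          rw [hce, sub_self, zero_mul, max_self]
    calc s * p + ∑ t ∈ S, max 0 (c t - p)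
        ≤ s * p + ∑ t ∈ S, (c t - p) * x t := by
          gcongr with t ht
          exact key t ht
      _ = ∑ t ∈ S, c t * x t := by
          have h2 : ∑ t ∈ S, (c t - p) * x t = (∑ t ∈ S, c t * x t) - p * ∑ t ∈ S, x t := by
            rw [Finset.mul_sum, ← Finset.sum_sub_distrib]
            exact Finset.sum_congr rfl (fun t ht => by ring)
          rw [h2, heq]; ring

lemma aux_max (T n m : ℕ)
    (it : Fin T → Fin n) (jt : Fin T → Fin m)
    (v vp : Fin T → ℝ) (B : Fin n → ℝ) (Bp : ℝ) (s : Fin m → ℝ)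
    (hv : ∀ t, 0 < v t) (hvp : ∀ t, 0 ≤ vp t)
    (hvpex : ∃ t, 0 < vp t)
    (hTi : ∀ i : Fin n, ∃ t, it t = i)
    (hB : ∀ i, 0 < B i) (hBp : 0 < Bp) (hs : ∀ j, 0 < s j) :
    ∃ xs : Fin T → ℝ,
      (∀ t, xs t ∈ Set.Icc (0 : ℝ) 1) ∧
      (∀ j, ∑ t ∈ univ.filter (fun t => jt t = j), xs t ≤ s j) ∧
      (∀ i, 0 < ∑ t ∈ univ.filter (fun t => it t = i), v t * xs t) ∧
      (0 < ∑ t, vp t * xs t) ∧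
      (∀ x : Fin T → ℝ, (∀ t, x t ∈ Set.Icc (0 : ℝ) 1) →
        (∀ j, ∑ t ∈ univ.filter (fun t => jt t = j), x t ≤ s j) →
        (∀ i, 0 < ∑ t ∈ univ.filter (fun t => it t = i), v t * x t) →
        (0 < ∑ t, vp t * x t) →
        (∑ i, B i * Real.log (∑ t ∈ univ.filter (fun t => it t = i), v t * x t)) +
            Bp * Real.log (∑ t, vp t * x t) ≤
          (∑ i, B i * Real.log (∑ t ∈ univ.filter (fun t => it t = i), v t * xs t)) +
            Bp * Real.log (∑ t, vp t * xs t)) := by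
  classical
  obtain ⟨tp, htp⟩ := hvpex
  set u : Fin n → (Fin T → ℝ) → ℝ :=
    fun i x => ∑ t ∈ univ.filter (fun t => it t = i), v t * x t with hudef
  set up : (Fin T → ℝ) → ℝ := fun x => ∑ t, vp t * x t with hupdef
  set f : (Fin T → ℝ) → ℝ :=
    fun x => (∑ i, B i * Real.log (u i x)) + Bp * Real.log (up x) with hfdef
  -- continuity of utilities
  have hucont : ∀ i, Continuous (u i) := fun i =>
    continuous_finset_sum _ fun t _ => continuous_const.mul (continuous_apply t)
  have hupcont : Continuous up :=
    continuous_finset_sum _ fun t _ => continuous_const.mul (continuous_apply t)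
  -- Slater point
  have hm : (0:ℕ) < m := Fin.pos_iff_nonempty.mpr ⟨jt tp⟩
  set sm : ℝ := univ.inf' (univ_nonempty_iff.mpr (Fin.pos_iff_nonempty.mp hm)) s with hsm
  have hsmpos : 0 < sm := by
    obtain ⟨j, _, hje⟩ := Finset.exists_mem_eq_inf' (univ_nonempty_iff.mpr (Fin.pos_iff_nonempty.mp hm)) s
    rw [hsm, hje]; exact hs j
  set ε : ℝ := min 1 (sm / (T + 1)) with hε
  have hεpos : 0 < ε := lt_min one_pos (by positivity)
  have hε1 : ε ≤ 1 := min_le_left _ _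
  set x₀ : Fin T → ℝ := fun _ => ε with hx₀
  have hx₀Icc : ∀ t, x₀ t ∈ Set.Icc (0:ℝ) 1 := fun t => ⟨hεpos.le, hε1⟩
  have hx₀sup : ∀ j, ∑ t ∈ univ.filter (fun t => jt t = j), x₀ t ≤ s j := by
    intro j
    have hcard : ((univ.filter (fun t => jt t = j)).card : ℝ) ≤ (T : ℝ) := by
      have := Finset.card_filter_le (univ : Finset (Fin T)) (fun t => jt t = j)
      simpa using (Nat.cast_le (α := ℝ)).mpr this
    have : ∑ t ∈ univ.filter (fun t => jt t = j), x₀ t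
        = ((univ.filter (fun t => jt t = j)).card : ℝ) * ε := by
      rw [hx₀, Finset.sum_const, nsmul_eq_mul]
    rw [this]
    have h1 : ((univ.filter (fun t => jt t = j)).card : ℝ) * ε ≤ (T:ℝ) * ε :=
      mul_le_mul_of_nonneg_right hcard hεpos.le
    have h2 : (T:ℝ) * ε ≤ (T:ℝ) * (sm / (T+1)) :=
      mul_le_mul_of_nonneg_left (min_le_right _ _) (Nat.cast_nonneg T)
    have h3 : (T:ℝ) * (sm / (T+1)) ≤ sm := by
      rw [mul_div_assoc']
      rw [div_le_iff₀ (by positivity)]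
      nlinarith [hsmpos]
    have h4 : sm ≤ s j := Finset.inf'_le s (mem_univ j)
    linarith
  have hx₀u : ∀ i, 0 < u i x₀ := by
    intro i
    obtain ⟨t, ht⟩ := hTi i
    apply Finset.sum_pos'
    · intro r hr; exact (mul_pos (hv r) hεpos).le
    · exact ⟨t, by simp [ht], mul_pos (hv t) hεpos⟩
  have hx₀up : 0 < up x₀ := by
    apply Finset.sum_pos'
    · intro r hr; exact mul_nonneg (hvp r) hεpos.le
    · exact ⟨tp, mem_univ tp, mul_pos htp hεpos⟩
  set f₀ : ℝ := f x₀ with hf₀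
  -- upper bound machinery
  set W : ℝ := max 1 (∑ t, v t) with hW
  set Wp : ℝ := max 1 (∑ t, vp t) with hWp
  have hW1 : (1:ℝ) ≤ W := le_max_left _ _
  have hWp1 : (1:ℝ) ≤ Wp := le_max_left _ _
  set C : ℝ := (∑ i, B i * Real.log W) + Bp * Real.log Wp with hC
  have hbound : ∀ x : Fin T → ℝ, (∀ t, x t ∈ Set.Icc (0:ℝ) 1) →
      (∀ i, 0 < u i x) → (0 < up x) →
      f x ≤ C + (∑ i, B i * min 0 (Real.log (u i x))) + Bp * min 0 (Real.log (up x)) := by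
    intro x hxI hxu hxup
    have hub : ∀ i, u i x ≤ W := by
      intro i
      refine le_trans ?_ (le_max_right 1 (∑ t, v t))
      calc u i x ≤ ∑ t ∈ univ.filter (fun t => it t = i), v t := by
            apply Finset.sum_le_sum
            intro t ht
            nlinarith [(hxI t).1, (hxI t).2, hv t]
        _ ≤ ∑ t, v t := Finset.sum_le_sum_of_subset_of_nonneg (Finset.filter_subset _ _)
            (fun t _ _ => (hv t).le)
    have hubp : up x ≤ Wp := by
      refine le_trans ?_ (le_max_right 1 (∑ t, vp t))
      apply Finset.sum_le_sum
      intro t ht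
      nlinarith [(hxI t).1, (hxI t).2, hvp t]
    have key : ∀ (a Wa : ℝ), 0 < a → a ≤ Wa → 1 ≤ Wa →
        Real.log a ≤ Real.log Wa + min 0 (Real.log a) := by
      intro a Wa ha haW hWa
      rcases le_or_gt (Real.log a) 0 with h | h
      · rw [min_eq_right h]
        have : 0 ≤ Real.log Wa := Real.log_nonneg hWa
        linarith
      · rw [min_eq_left h.le]
        have := Real.log_le_log ha haW
        linarith
    have t1 : ∀ i, B i * Real.log (u i x)
        ≤ B i * Real.log W + B i * min 0 (Real.log (u i x)) := by
      intro i
      have := key (u i x) W (hxu i) (hub i) hW1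
      nlinarith [(hB i).le, this]
    have t2 : Bp * Real.log (up x) ≤ Bp * Real.log Wp + Bp * min 0 (Real.log (up x)) := by
      have := key (up x) Wp hxup hubp hWp1
      nlinarith [hBp.le, this]
    have := Finset.sum_le_sum (fun i (_ : i ∈ univ) => t1 i)
    rw [Finset.sum_add_distrib] at this
    rw [hfdef, hC]
    dsimp only
    linarith
  -- threshold
  set M : ℝ := max 0 (max ((C + 1 - f₀)/Bp) (∑ i, |(C + 1 - f₀)/B i|)) with hM
  have hM0 : 0 ≤ M := le_max_left _ _
  have hMi : ∀ i, (C + 1 - f₀)/B i ≤ M := by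
    intro i
    refine le_trans ?_ (le_trans (le_max_right _ _) (le_max_right _ _))
    refine le_trans (le_abs_self _) ?_
    exact Finset.single_le_sum (f := fun i => |(C + 1 - f₀)/B i|)
      (fun i _ => abs_nonneg _) (mem_univ i)
  have hMp : (C + 1 - f₀)/Bp ≤ M := le_trans (le_max_left _ _) (le_max_right _ _)
  set δe : ℝ := Real.exp (-(M + 1)) with hδe
  have hδepos : 0 < δe := Real.exp_pos _
  have hδelt1 : δe < 1 := by
    rw [hδe, Real.exp_lt_one_iff]
    linarith
  have hlogδe : Real.log δe = -(M+1) := Real.log_exp _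
  -- the compact region
  set di : Fin n → ℝ := fun i => min δe (u i x₀) with hdi
  set dp : ℝ := min δe (up x₀) with hdp
  have hdipos : ∀ i, 0 < di i := fun i => lt_min hδepos (hx₀u i)
  have hdppos : 0 < dp := lt_min hδepos hx₀up
  set K2 : Set (Fin T → ℝ) := {x | (∀ t, x t ∈ Set.Icc (0:ℝ) 1) ∧
      (∀ j, ∑ t ∈ univ.filter (fun t => jt t = j), x t ≤ s j) ∧
      (∀ i, di i ≤ u i x) ∧ dp ≤ up x} with hK2
  have hK2sub : K2 ⊆ Set.univ.pi (fun _ : Fin T => Set.Icc (0:ℝ) 1) := by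
    intro x hx
    rw [Set.mem_pi]
    exact fun t _ => hx.1 t
  have hK2closed : IsClosed K2 := by
    have e : K2 = (⋂ t, {x : Fin T → ℝ | x t ∈ Set.Icc (0:ℝ) 1}) ∩
        ((⋂ j, {x | ∑ t ∈ univ.filter (fun t => jt t = j), x t ≤ s j}) ∩
        ((⋂ i, {x | di i ≤ u i x}) ∩ {x | dp ≤ up x})) := by
      rw [hK2]; ext x
      simp only [Set.mem_setOf_eq, Set.mem_inter_iff, Set.mem_iInter]
    rw [e]
    refine IsClosed.inter ?_ (IsClosed.inter ?_ (IsClosed.inter ?_ ?_))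
    · exact isClosed_iInter fun t =>
        IsClosed.preimage (continuous_apply t) isClosed_Icc
    · exact isClosed_iInter fun j =>
        isClosed_le (continuous_finset_sum _ fun t _ => (continuous_apply t)) continuous_const
    · exact isClosed_iInter fun i => isClosed_le continuous_const (hucont i)
    · exact isClosed_le continuous_const hupcont
  have hK2cpt : IsCompact K2 :=
    IsCompact.of_isClosed_subset (isCompact_univ_pi fun _ => isCompact_Icc) hK2closed hK2sub
  have hx₀K2 : x₀ ∈ K2 := by
    refine ⟨hx₀Icc, hx₀sup, fun i => min_le_right _ _, min_le_right _ _⟩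
  have hfcont : ContinuousOn f K2 := by
    have h1 : ∀ i : Fin n, ContinuousOn (fun x => Real.log (u i x)) K2 := by
      intro i
      refine Real.continuousOn_log.comp (hucont i).continuousOn ?_
      intro x hx
      have h2 : di i ≤ u i x := hx.2.2.1 i
      simp only [Set.mem_compl_iff, Set.mem_singleton_iff]
      exact ne_of_gt (lt_of_lt_of_le (hdipos i) h2)
    have h2 : ContinuousOn (fun x => Real.log (up x)) K2 := by
      refine Real.continuousOn_log.comp hupcont.continuousOn ?_
      intro x hx
      have h2 : dp ≤ up x := hx.2.2.2
      simp only [Set.mem_compl_iff, Set.mem_singleton_iff]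
      exact ne_of_gt (lt_of_lt_of_le hdppos h2)
    rw [hfdef]
    exact (continuousOn_finset_sum _ fun i _ => continuousOn_const.mul (h1 i)).add
      (continuousOn_const.mul h2)
  obtain ⟨xs, hxsK2, hxsmax⟩ := hK2cpt.exists_isMaxOn ⟨x₀, hx₀K2⟩ hfcont
  have hf₀xs : f₀ ≤ f xs := hxsmax hx₀K2
  refine ⟨xs, hxsK2.1, hxsK2.2.1,
    fun i => lt_of_lt_of_le (hdipos i) (hxsK2.2.2.1 i),
    lt_of_lt_of_le hdppos hxsK2.2.2.2, ?_⟩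
  intro x hxI hxsup hxu hxup
  show f x ≤ f xs
  by_cases hxin : (∀ i, di i ≤ u i x) ∧ dp ≤ up x
  · have hxK2 : x ∈ K2 := ⟨hxI, hxsup, hxin.1, hxin.2⟩
    exact hxsmax hxK2
  · -- some utility is small
    have hnonpos : ∀ i, B i * min 0 (Real.log (u i x)) ≤ 0 := by
      intro i
      have : min 0 (Real.log (u i x)) ≤ 0 := min_le_left _ _
      nlinarith [(hB i).le]
    have hnonposp : Bp * min 0 (Real.log (up x)) ≤ 0 := by
      have : min 0 (Real.log (up x)) ≤ 0 := min_le_left _ _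
      nlinarith [hBp.le]
    have hfx := hbound x hxI hxu hxup
    have hmain : f x ≤ f₀ - 1 := by
      rw [not_and_or] at hxin
      rcases hxin with h | h
      · push_neg at h
        obtain ⟨i0, hi0⟩ := h
        have hsmall : u i0 x < δe := lt_of_lt_of_le hi0 (min_le_left _ _)
        have hlog : Real.log (u i0 x) ≤ -(M+1) := by
          rw [← hlogδe]
          exact Real.log_le_log (hxu i0) hsmall.le
        have hminterm : B i0 * min 0 (Real.log (u i0 x)) ≤ f₀ - C - 1 := by
          have hmin : min 0 (Real.log (u i0 x)) ≤ -(M+1) := le_trans (min_le_right _ _) hlog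
          have h1 : B i0 * min 0 (Real.log (u i0 x)) ≤ B i0 * (-(M+1)) :=
            mul_le_mul_of_nonneg_left hmin (hB i0).le
          have h2 : (C + 1 - f₀) ≤ B i0 * M := by
            have := hMi i0
            rw [div_le_iff₀ (hB i0)] at this
            linarith [this]
          nlinarith [hB i0]
        have hsum : ∑ i, B i * min 0 (Real.log (u i x)) ≤ f₀ - C - 1 := by
          calc ∑ i, B i * min 0 (Real.log (u i x))
              ≤ B i0 * min 0 (Real.log (u i0 x)) := by
                have he : B i0 * min 0 (Real.log (u i0 x)) +
                    ∑ i ∈ univ.erase i0, B i * min 0 (Real.log (u i x))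
                    = ∑ i, B i * min 0 (Real.log (u i x)) :=
                  Finset.add_sum_erase univ (fun i => B i * min 0 (Real.log (u i x))) (mem_univ i0)
                have hz : ∑ i ∈ univ.erase i0, B i * min 0 (Real.log (u i x)) ≤ 0 :=
                  Finset.sum_nonpos (fun i _ => hnonpos i)
                linarith
            _ ≤ f₀ - C - 1 := hminterm
        linarith
      · push_neg at h
        have hsmall : up x < δe := lt_of_lt_of_le h (min_le_left _ _)
        have hlog : Real.log (up x) ≤ -(M+1) := by
          rw [← hlogδe]
          exact Real.log_le_log hxup hsmall.le
        have hminterm : Bp * min 0 (Real.log (up x)) ≤ f₀ - C - 1 := by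
          have hmin : min 0 (Real.log (up x)) ≤ -(M+1) := le_trans (min_le_right _ _) hlog
          have h1 : Bp * min 0 (Real.log (up x)) ≤ Bp * (-(M+1)) :=
            mul_le_mul_of_nonneg_left hmin hBp.le
          have h2 : (C + 1 - f₀) ≤ Bp * M := by
            have := hMp
            rw [div_le_iff₀ hBp] at this
            linarith [this]
          nlinarith [hBp]
        have hsum : ∑ i, B i * min 0 (Real.log (u i x)) ≤ 0 :=
          Finset.sum_nonpos (fun i _ => hnonpos i)
        linarith
    linarith

/-- **Strong duality for the Eisenberg–Gale program.** The supremum of the primal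
objective over feasible allocations with positive utilities equals the infimum of
the dual objective over dual-feasible `(p, λ, β, βp)`. -/
theorem EG_strong_duality
    (T n m : ℕ)
    (it : Fin T → Fin n) (jt : Fin T → Fin m)
    (v vp : Fin T → ℝ)
    (B : Fin n → ℝ) (Bp : ℝ) (s : Fin m → ℝ)
    (hv : ∀ t, 0 < v t) (hvp : ∀ t, 0 ≤ vp t)
    (hvpex : ∃ t, 0 < vp t)
    (hTi : ∀ i : Fin n, ∃ t, it t = i)
    (hB : ∀ i, 0 < B i) (hBp : 0 < Bp) (hs : ∀ j, 0 < s j) :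
    sSup {y : ℝ | ∃ x : Fin T → ℝ,
        (∀ t, x t ∈ Set.Icc (0 : ℝ) 1) ∧
        (∀ j, ∑ t ∈ univ.filter (fun t => jt t = j), x t ≤ s j) ∧
        (∀ i, 0 < ∑ t ∈ univ.filter (fun t => it t = i), v t * x t) ∧
        (0 < ∑ t, vp t * x t) ∧
        y = (∑ i, B i * Real.log (∑ t ∈ univ.filter (fun t => it t = i), v t * x t)) +
          Bp * Real.log (∑ t, vp t * x t)} =
      sInf {y : ℝ | ∃ (p : Fin m → ℝ) (lam : Fin T → ℝ) (β : Fin n → ℝ) (βp : ℝ),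
        (∀ j, 0 ≤ p j) ∧ (∀ t, 0 ≤ lam t) ∧ (∀ i, 0 < β i) ∧ 0 < βp ∧
        (∀ t, β (it t) * v t + βp * vp t - lam t ≤ p (jt t)) ∧
        y = (∑ j, s j * p j) + (∑ t, lam t)
          - (∑ i, B i * Real.log (β i)) - Bp * Real.log βp
          + (∑ i, (B i * Real.log (B i) - B i)) + (Bp * Real.log Bp - Bp)} := by
  classical
  set P : Set ℝ := {y : ℝ | ∃ x : Fin T → ℝ,
        (∀ t, x t ∈ Set.Icc (0 : ℝ) 1) ∧
        (∀ j, ∑ t ∈ univ.filter (fun t => jt t = j), x t ≤ s j) ∧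
        (∀ i, 0 < ∑ t ∈ univ.filter (fun t => it t = i), v t * x t) ∧
        (0 < ∑ t, vp t * x t) ∧
        y = (∑ i, B i * Real.log (∑ t ∈ univ.filter (fun t => it t = i), v t * x t)) +
          Bp * Real.log (∑ t, vp t * x t)} with hPdef
  set D : Set ℝ := {y : ℝ | ∃ (p : Fin m → ℝ) (lam : Fin T → ℝ) (β : Fin n → ℝ) (βp : ℝ),
        (∀ j, 0 ≤ p j) ∧ (∀ t, 0 ≤ lam t) ∧ (∀ i, 0 < β i) ∧ 0 < βp ∧
        (∀ t, β (it t) * v t + βp * vp t - lam t ≤ p (jt t)) ∧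
        y = (∑ j, s j * p j) + (∑ t, lam t)
          - (∑ i, B i * Real.log (β i)) - Bp * Real.log βp
          + (∑ i, (B i * Real.log (B i) - B i)) + (Bp * Real.log Bp - Bp)} with hDdef
  obtain ⟨xs, hxsI, hxssup, hxsu, hxsup, hxsmax⟩ :=
    aux_max T n m it jt v vp B Bp s hv hvp hvpex hTi hB hBp hs
  set u : Fin n → ℝ := fun i => ∑ t ∈ univ.filter (fun t => it t = i), v t * xs t with hu
  set upv : ℝ := ∑ t, vp t * xs t with hupv
  set fs : ℝ := (∑ i, B i * Real.log (u i)) + Bp * Real.log upv with hfs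
  set β : Fin n → ℝ := fun i => B i / u i with hβ
  set βp : ℝ := Bp / upv with hβp
  set c : Fin T → ℝ := fun t => β (it t) * v t + βp * vp t with hc
  have hβpos : ∀ i, 0 < β i := fun i => div_pos (hB i) (hxsu i)
  have hβppos : 0 < βp := div_pos hBp hxsup
  have hcpos : ∀ t, 0 < c t := fun t =>
    add_pos_of_pos_of_nonneg (mul_pos (hβpos (it t)) (hv t))
      (mul_nonneg hβppos.le (hvp t))
  -- LP optimality of xs
  have hLP : ∀ x' : Fin T → ℝ, (∀ t, x' t ∈ Set.Icc (0 : ℝ) 1) →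
      (∀ j, ∑ t ∈ univ.filter (fun t => jt t = j), x' t ≤ s j) →
      ∑ t, c t * x' t ≤ ∑ t, c t * xs t := by
    intro x' h1 h2
    exact aux_foc T n m it jt v vp B Bp s hv hvp hB hBp xs hxsI hxssup hxsu hxsup hxsmax x' h1 h2
  -- per-user dual prices
  have hpj : ∀ j : Fin m, ∃ p : ℝ, 0 ≤ p ∧
      s j * p + ∑ t ∈ univ.filter (fun t => jt t = j), max 0 (c t - p)
        ≤ ∑ t ∈ univ.filter (fun t => jt t = j), c t * xs t := by
    intro j
    apply aux_user (univ.filter (fun t => jt t = j)) c xs (s j)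
      (fun t _ => hcpos t) (fun t _ => (hxsI t).1) (fun t _ => (hxsI t).2) (hxssup j)
    intro y hy0 hy1 hysum
    set y' : Fin T → ℝ := fun t => if jt t = j then y t else xs t with hy'
    have hy'I : ∀ t, y' t ∈ Set.Icc (0:ℝ) 1 := by
      intro t
      simp only [hy']
      split
      · rename_i h
        exact ⟨hy0 t (by simp [h]), hy1 t (by simp [h])⟩
      · exact hxsI t
    have hy'sup : ∀ j', ∑ t ∈ univ.filter (fun t => jt t = j'), y' t ≤ s j' := by
      intro j'
      by_cases hjj : j' = j
      · subst hjj
        have he : ∑ t ∈ univ.filter (fun t => jt t = j'), y' t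
            = ∑ t ∈ univ.filter (fun t => jt t = j'), y t := by
          refine Finset.sum_congr rfl fun t ht => ?_
          have := (Finset.mem_filter.mp ht).2
          simp [hy', this]
        rw [he]; exact hysum
      · have he : ∑ t ∈ univ.filter (fun t => jt t = j'), y' t
            = ∑ t ∈ univ.filter (fun t => jt t = j'), xs t := by
          refine Finset.sum_congr rfl fun t ht => ?_
          have h2 := (Finset.mem_filter.mp ht).2
          have : ¬ (jt t = j) := by rw [h2]; exact hjj
          simp [hy', this]
        rw [he]; exact hxssup j'
    have hL := hLP y' hy'I hy'sup
    -- split the sums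
    have hsplit : ∀ z : Fin T → ℝ, ∑ t, c t * z t
        = (∑ t ∈ univ.filter (fun t => jt t = j), c t * z t)
          + ∑ t ∈ univ.filter (fun t => ¬ jt t = j), c t * z t := by
      intro z
      exact (Finset.sum_filter_add_sum_filter_not univ _ _).symm
    rw [hsplit y', hsplit xs] at hL
    have he1 : ∑ t ∈ univ.filter (fun t => jt t = j), c t * y' t
        = ∑ t ∈ univ.filter (fun t => jt t = j), c t * y t := by
      refine Finset.sum_congr rfl fun t ht => ?_
      have := (Finset.mem_filter.mp ht).2
      simp [hy', this]
    have he2 : ∑ t ∈ univ.filter (fun t => ¬ jt t = j), c t * y' t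
        = ∑ t ∈ univ.filter (fun t => ¬ jt t = j), c t * xs t := by
      refine Finset.sum_congr rfl fun t ht => ?_
      have := (Finset.mem_filter.mp ht).2
      simp [hy', this]
    rw [he1, he2] at hL
    linarith
  choose p hp0 hpbd using hpj
  set lam : Fin T → ℝ := fun t => max 0 (c t - p (jt t)) with hlam
  have hlam0 : ∀ t, 0 ≤ lam t := fun t => le_max_left _ _
  have hfeas : ∀ t, β (it t) * v t + βp * vp t - lam t ≤ p (jt t) := by
    intro t
    have h1 : c t - lam t ≤ p (jt t) := by
      simp only [hlam]
      rcases le_or_gt (c t - p (jt t)) 0 with h | h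
      · rw [max_eq_left h]
        linarith
      · rw [max_eq_right h.le]
        linarith
    simpa [hc] using h1
  set yD : ℝ := (∑ j, s j * p j) + (∑ t, lam t)
      - (∑ i, B i * Real.log (β i)) - Bp * Real.log βp
      + (∑ i, (B i * Real.log (B i) - B i)) + (Bp * Real.log Bp - Bp) with hyD
  -- key: yD ≤ fs
  have hkey : (∑ j, s j * p j) + (∑ t, lam t) ≤ (∑ i, B i) + Bp := by
    have h1 : ∑ t, lam t = ∑ j, ∑ t ∈ univ.filter (fun t => jt t = j), lam t :=
      (Finset.sum_fiberwise univ jt lam).symm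
    have h2 : ∀ j, ∑ t ∈ univ.filter (fun t => jt t = j), lam t
        = ∑ t ∈ univ.filter (fun t => jt t = j), max 0 (c t - p j) := by
      intro j
      refine Finset.sum_congr rfl fun t ht => ?_
      have := (Finset.mem_filter.mp ht).2
      simp [hlam, this]
    have h3 : (∑ j, s j * p j) + (∑ t, lam t)
        ≤ ∑ j, ∑ t ∈ univ.filter (fun t => jt t = j), c t * xs t := by
      rw [h1, ← Finset.sum_add_distrib]
      apply Finset.sum_le_sum
      intro j _
      rw [h2 j]
      exact hpbd j
    have h4 : ∑ j, ∑ t ∈ univ.filter (fun t => jt t = j), c t * xs t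
        = ∑ t, c t * xs t := Finset.sum_fiberwise univ jt _
    have h5 : ∑ t, c t * xs t = (∑ i, B i) + Bp := by
      have e1 : ∑ t, c t * xs t
          = (∑ t, β (it t) * (v t * xs t)) + ∑ t, βp * (vp t * xs t) := by
        rw [← Finset.sum_add_distrib]
        refine Finset.sum_congr rfl fun t _ => ?_
        simp only [hc]
        ring
      have e2 : ∑ t, β (it t) * (v t * xs t) = ∑ i, β i * u i := by
        rw [← Finset.sum_fiberwise univ it (fun t => β (it t) * (v t * xs t))]
        refine Finset.sum_congr rfl fun i _ => ?_
        rw [hu]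
        dsimp only
        rw [Finset.mul_sum]
        refine Finset.sum_congr rfl fun t ht => ?_
        rw [(Finset.mem_filter.mp ht).2]
      have e3 : ∑ t, βp * (vp t * xs t) = βp * upv := by
        rw [hupv, Finset.mul_sum]
      have e4 : ∀ i, β i * u i = B i := by
        intro i
        rw [hβ]
        dsimp only
        exact div_mul_cancel₀ (B i) (hxsu i).ne'
      have e5 : βp * upv = Bp := by
        rw [hβp]
        exact div_mul_cancel₀ Bp hxsup.ne'
      rw [e1, e2, e3, e5, Finset.sum_congr rfl fun i _ => e4 i]
    linarith [h3, h4 ▸ h3, h5]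
  have hyDle : yD ≤ fs := by
    have hlogβ : ∀ i, Real.log (β i) = Real.log (B i) - Real.log (u i) := by
      intro i
      rw [hβ]
      dsimp only
      exact Real.log_div (hB i).ne' (hxsu i).ne'
    have hlogβp : Real.log βp = Real.log Bp - Real.log upv :=
      Real.log_div hBp.ne' hxsup.ne'
    have e : yD = ((∑ j, s j * p j) + (∑ t, lam t) - (∑ i, B i) - Bp) + fs := by
      have es : ∑ i, B i * Real.log (β i)
          = (∑ i, B i * Real.log (B i)) - ∑ i, B i * Real.log (u i) := by
        rw [← Finset.sum_sub_distrib]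
        refine Finset.sum_congr rfl fun i _ => ?_
        rw [hlogβ i]; ring
      rw [hyD, hfs, hlogβp, es, Finset.sum_sub_distrib]
      ring
    rw [e]
    have h4 : ∑ j, ∑ t ∈ univ.filter (fun t => jt t = j), c t * xs t
        = ∑ t, c t * xs t := Finset.sum_fiberwise univ jt _
    linarith [hkey]
  -- membership facts
  have hfsP : fs ∈ P :=
    ⟨xs, hxsI, hxssup, hxsu, hxsup, rfl⟩
  have hyDD : yD ∈ D :=
    ⟨p, lam, β, βp, hp0, hlam0, hβpos, hβppos, hfeas, rfl⟩
  have hweak : ∀ yP ∈ P, yP ≤ fs := by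
    rintro yP ⟨x, h1, h2, h3, h4, rfl⟩
    exact hxsmax x h1 h2 h3 h4
  have hweak2 : ∀ yDD ∈ D, fs ≤ yDD := by
    rintro yDD ⟨p', lam', β', βp', h1, h2, h3, h4, h5, rfl⟩
    exact aux_weak T n m it jt v vp B Bp s hB hBp xs p' lam' β' βp'
      hxsI hxssup hxsu hxsup h1 h2 h3 h4 h5
  have hSup : sSup P = fs := IsGreatest.csSup_eq ⟨hfsP, hweak⟩
  have hInf : sInf D = fs := by
    apply le_antisymm
    · exact le_trans (csInf_le ⟨fs, hweak2⟩ hyDD) hyDle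
    · exact le_csInf ⟨yD, hyDD⟩ hweak2
  rw [hSup, hInf]
end
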